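/- arXiv:2307.06928 — 2 statements merged into one kernel-verified Lean document; each statement's English description precedes it below -/
import Mathlib

section
/- Typing is closed under fixpoints: if λx.M is a closed abstraction with λx.M ∈ ⟦A→A⟧, then fix x.M ∈ T̄⟦A⟧. -/
namespace PCF

/-- Terms of the simple CBV, PCF-like language.  Variables are natural numbers. -/
inductive Tm : Type
  | var : ℕ → Tm
  | zero : Tm
  | succ : Tm → Tm
  | pred : Tm → Tm
  | ifz : Tm → Tm → Tm → Tm
  | abs : ℕ → Tm → Tm
  | app : Tm → Tm → Tm
  | fix : ℕ → Tm → Tm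
  | pair : Tm → Tm → Tm
  | lett : ℕ → ℕ → Tm → Tm → Tm
  deriving DecidableEq

/-- The numeral `succ^n(zero)`. -/
def numeral : ℕ → Tm
  | 0 => .zero
  | n + 1 => .succ (numeral n)

/-- Values. -/
inductive IsValue : Tm → Prop
  | var (x : ℕ) : IsValue (.var x)
  | num (n : ℕ) : IsValue (numeral n)
  | pair {V W : Tm} : IsValue V → IsValue W → IsValue (.pair V W)
  | abs (x : ℕ) (M : Tm) : IsValue (.abs x M)

/-- Capture-permitting substitution `M[N/x]` (adequate since we only ever
substitute closed terms). -/
def subst (x : ℕ) (N : Tm) : Tm → Tm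
  | .var y => if y = x then N else .var y
  | .zero => .zero
  | .succ M => .succ (subst x N M)
  | .pred M => .pred (subst x N M)
  | .ifz M P Q => .ifz (subst x N M) (subst x N P) (subst x N Q)
  | .abs y M => if y = x then .abs y M else .abs y (subst x N M)
  | .app M P => .app (subst x N M) (subst x N P)
  | .fix y M => if y = x then .fix y M else .fix y (subst x N M)
  | .pair M P => .pair (subst x N M) (subst x N P)
  | .lett y z M P =>
      .lett y z (subst x N M) (if y = x ∨ z = x then P else subst x N P)

/-- Free variables. -/
def fv : Tm → Finset ℕ
  | .var y => {y}
  | .zero => ∅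
  | .succ M => fv M
  | .pred M => fv M
  | .ifz M P Q => fv M ∪ fv P ∪ fv Q
  | .abs y M => fv M \ {y}
  | .app M P => fv M ∪ fv P
  | .fix y M => fv M \ {y}
  | .pair M P => fv M ∪ fv P
  | .lett y z M P => fv M ∪ (fv P \ {y, z})

def ClosedTm (M : Tm) : Prop := fv M = ∅

/-- One-step call-by-value reduction (closure of the redex rules under
evaluation contexts). -/
inductive Step : Tm → Tm → Prop
  | ifz_zero {N P : Tm} : Step (.ifz (numeral 0) N P) N
  | ifz_succ {n : ℕ} {N P : Tm} : Step (.ifz (numeral (n + 1)) N P) P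
  | lett_beta {x y : ℕ} {V W M : Tm} : IsValue V → IsValue W →
      Step (.lett x y (.pair V W) M) (subst y W (subst x V M))
  | fix_step {x : ℕ} {M : Tm} : Step (.fix x M) (subst x (.fix x M) M)
  | pred_zero : Step (.pred (numeral 0)) (numeral 0)
  | pred_succ {n : ℕ} : Step (.pred (numeral (n + 1))) (numeral n)
  | beta {x : ℕ} {M V : Tm} : IsValue V → Step (.app (.abs x M) V) (subst x V M)
  | succ_ctx {M M' : Tm} : Step M M' → Step (.succ M) (.succ M')
  | pred_ctx {M M' : Tm} : Step M M' → Step (.pred M) (.pred M')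
  | pair_left {M M' N : Tm} : Step M M' → Step (.pair M N) (.pair M' N)
  | pair_right {V N N' : Tm} : IsValue V → Step N N' → Step (.pair V N) (.pair V N')
  | lett_ctx {x y : ℕ} {M M' N : Tm} : Step M M' → Step (.lett x y M N) (.lett x y M' N)
  | ifz_ctx {M M' N P : Tm} : Step M M' → Step (.ifz M N P) (.ifz M' N P)
  | app_right {x : ℕ} {M N N' : Tm} : Step N N' →
      Step (.app (.abs x M) N) (.app (.abs x M) N')
  | app_left {M M' N : Tm} : Step M M' → Step (.app M N) (.app M' N)

/-- Many-step reduction. -/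
def Steps : Tm → Tm → Prop := Relation.ReflTransGen Step

def NormalForm (M : Tm) : Prop := ¬ ∃ N, Step M N

def Evaluates (M : Tm) : Prop := ∃ V, Steps M V ∧ IsValue V

/-- `M` diverges: it has no normal form. -/
def Diverges (M : Tm) : Prop := ¬ ∃ N, Steps M N ∧ NormalForm N

def Stuck (M : Tm) : Prop := NormalForm M ∧ ¬ IsValue M

def GoesWrong (M : Tm) : Prop := ∃ P, Steps M P ∧ Stuck P

/-- `div` = `fix x. x`. -/
def divTm : Tm := .fix 0 (.var 0)

/-- `P ≲ N`: if `P` reduces to a normal form then `N` reduces to the same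
normal form. -/
def RefBelow (P N : Tm) : Prop := ∀ R, Steps P R → NormalForm R → Steps N R

/-- Fixpoint approximants. -/
def fixApprox (x : ℕ) (M : Tm) : ℕ → Tm
  | 0 => divTm
  | n + 1 => subst x (fixApprox x M n) M

/-- Finitely verifiable types. -/
inductive FTy : Type
  | nat : FTy
  | prod : FTy → FTy → FTy
  deriving DecidableEq

/-- Types: `Nat | A×B | A→B | A⇝F | Ok` (necessity arrows only to finitely
verifiable types). -/
inductive Ty : Type
  | nat : Ty
  | prod : Ty → Ty → Ty
  | arrow : Ty → Ty → Ty
  | narrow : Ty → FTy → Ty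
  | ok : Ty
  deriving DecidableEq

/-- Inclusion of finitely verifiable types into types. -/
def FTy.toTy : FTy → Ty
  | .nat => .nat
  | .prod A B => .prod A.toTy B.toTy

/-- `T⟦·⟧` applied to a set of values: the terms that evaluate into it. -/
def TSem (Sv : Tm → Prop) (M : Tm) : Prop :=
  ClosedTm M ∧ ∃ V, Steps M V ∧ IsValue V ∧ Sv V

/-- `T̄⟦·⟧`: evaluate into the set, or diverge. -/
def TBarSem (Sv : Tm → Prop) (M : Tm) : Prop :=
  TSem Sv M ∨ (ClosedTm M ∧ Diverges M)

/-- Semantics of finitely verifiable types. -/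
def FSem : FTy → Tm → Prop
  | .nat => fun M => ∃ n, M = numeral n
  | .prod A B => fun M => ∃ V W, M = .pair V W ∧ FSem A V ∧ FSem B W

/-- Semantics of types, as sets of closed values. -/
def Sem : Ty → Tm → Prop
  | .nat => fun M => ∃ n, M = numeral n
  | .prod A B => fun M => ∃ V W, M = .pair V W ∧ Sem A V ∧ Sem B W
  | .arrow A B => fun M => ∃ x P, M = .abs x P ∧ ClosedTm M ∧
      ∀ V, ClosedTm V → IsValue V → Sem A V → TBarSem (Sem B) (subst x V P)
  | .narrow A F => fun M => ∃ x P, M = .abs x P ∧ ClosedTm M ∧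
      ∀ V, ClosedTm V → IsValue V → TSem (FSem F) (subst x V P) → Sem A V
  | .ok => fun M => ClosedTm M ∧ IsValue M

/-- Typing formulas `M : A`. -/
structure Formula where
  tm : Tm
  ty : Ty
  deriving DecidableEq

/-- Make a formula. -/
def fm (M : Tm) (A : Ty) : Formula := ⟨M, A⟩

/-- `x` does not occur free in any formula of `Γ`. -/
def FreshFor (x : ℕ) (Γ : Finset Formula) : Prop := ∀ φ ∈ Γ, x ∉ fv φ.tm

def IsArrowTy (A : Ty) : Prop :=
  (∃ B C, A = .arrow B C) ∨ (∃ B F, A = .narrow B F)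

def IsProdTy (A : Ty) : Prop := ∃ B C, A = .prod B C

/-- Disjointness of types: one is `Nat` and the other is not, or one is an
arrow and the other is not, or one is a product and the other is not. -/
def Disj (A B : Ty) : Prop :=
  (A = .nat ∧ B ≠ .nat) ∨ (B = .nat ∧ A ≠ .nat) ∨
  (IsArrowTy A ∧ ¬ IsArrowTy B) ∨ (IsArrowTy B ∧ ¬ IsArrowTy A) ∨
  (IsProdTy A ∧ ¬ IsProdTy B) ∨ (IsProdTy B ∧ ¬ IsProdTy A)

/-- The two-sided type system (including the `Ok` rules). -/
inductive Der : Finset Formula → Finset Formula → Prop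
  | id (Γ Δ : Finset Formula) (x : ℕ) (A : Ty) :
      Der (insert (fm (.var x) A) Γ) (insert (fm (.var x) A) Δ)
  | dis {Γ Δ : Finset Formula} {M : Tm} {A B : Ty} :
      Disj A B → Der Γ (insert (fm M B) Δ) → Der (insert (fm M A) Γ) Δ
  | zeroR (Γ Δ : Finset Formula) : Der Γ (insert (fm .zero .nat) Δ)
  | succR {Γ Δ M} : Der Γ (insert (fm M .nat) Δ) → Der Γ (insert (fm (.succ M) .nat) Δ)
  | predR {Γ Δ M} : Der Γ (insert (fm M .nat) Δ) → Der Γ (insert (fm (.pred M) .nat) Δ)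
  | letR {Γ Δ : Finset Formula} {x y : ℕ} {M N : Tm} {A B C : Ty} :
      Der Γ (insert (fm M (.prod B C)) Δ) →
      Der (insert (fm (.var x) B) (insert (fm (.var y) C) Γ)) (insert (fm N A) Δ) →
      FreshFor x Γ → FreshFor x Δ → FreshFor y Γ → FreshFor y Δ →
      Der Γ (insert (fm (.lett x y M N) A) Δ)
  | appR {Γ Δ M N A B} :
      Der Γ (insert (fm M (.arrow B A)) Δ) → Der Γ (insert (fm N B) Δ) →
      Der Γ (insert (fm (.app M N) A) Δ)
  | pairR {Γ Δ M N A B} :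
      Der Γ (insert (fm M A) Δ) → Der Γ (insert (fm N B) Δ) →
      Der Γ (insert (fm (.pair M N) (.prod A B)) Δ)
  | absR {Γ Δ : Finset Formula} {x : ℕ} {M : Tm} {A B : Ty} :
      Der (insert (fm (.var x) B) Γ) (insert (fm M A) Δ) →
      FreshFor x Γ → FreshFor x Δ →
      Der Γ (insert (fm (.abs x M) (.arrow B A)) Δ)
  | abnR {Γ Δ : Finset Formula} {x : ℕ} {M : Tm} {B : Ty} {F : FTy} :
      Der (insert (fm M F.toTy) Γ) (insert (fm (.var x) B) Δ) →
      FreshFor x Γ → FreshFor x Δ →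
      Der Γ (insert (fm (.abs x M) (.narrow B F)) Δ)
  | fixR {Γ Δ : Finset Formula} {x : ℕ} {M : Tm} {A : Ty} :
      Der (insert (fm (.var x) A) Γ) (insert (fm M A) Δ) →
      FreshFor x Γ → FreshFor x Δ →
      Der Γ (insert (fm (.fix x M) A) Δ)
  | ifzR {Γ Δ M N P A} :
      Der Γ (insert (fm M .nat) Δ) → Der Γ (insert (fm N A) Δ) →
      Der Γ (insert (fm P A) Δ) →
      Der Γ (insert (fm (.ifz M N P) A) Δ)
  | succL {Γ Δ M} : Der (insert (fm M .nat) Γ) Δ → Der (insert (fm (.succ M) .nat) Γ) Δ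
  | predL {Γ Δ M} : Der (insert (fm M .nat) Γ) Δ → Der (insert (fm (.pred M) .nat) Γ) Δ
  | appL {Γ Δ : Finset Formula} {M N : Tm} {B : Ty} {A : FTy} :
      Der Γ (insert (fm M (.narrow B A)) Δ) → Der (insert (fm N B) Γ) Δ →
      Der (insert (fm (.app M N) A.toTy) Γ) Δ
  | pairL1 {Γ Δ M1 M2 A1 A2} : Der (insert (fm M1 A1) Γ) Δ →
      Der (insert (fm (.pair M1 M2) (.prod A1 A2)) Γ) Δ
  | pairL2 {Γ Δ M1 M2 A1 A2} : Der (insert (fm M2 A2) Γ) Δ →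
      Der (insert (fm (.pair M1 M2) (.prod A1 A2)) Γ) Δ
  | letL1 {Γ Δ : Finset Formula} {x y : ℕ} {M N : Tm} {A : Ty} :
      Der (insert (fm N A) Γ) Δ →
      FreshFor x Γ → FreshFor x Δ → FreshFor y Γ → FreshFor y Δ →
      Der (insert (fm (.lett x y M N) A) Γ) Δ
  | letL2 {Γ Δ : Finset Formula} {x y : ℕ} {M N : Tm} {A B1 B2 : Ty} :
      Der (insert (fm M (.prod B1 B2)) Γ) Δ →
      Der (insert (fm N A) Γ) (insert (fm (.var x) B1) Δ) →
      Der (insert (fm N A) Γ) (insert (fm (.var y) B2) Δ) →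
      FreshFor x Γ → FreshFor x Δ → FreshFor y Γ → FreshFor y Δ →
      Der (insert (fm (.lett x y M N) A) Γ) Δ
  | ifzL1 {Γ Δ M N P A} : Der (insert (fm M .nat) Γ) Δ →
      Der (insert (fm (.ifz M N P) A) Γ) Δ
  | ifzL2 {Γ Δ M N P A} : Der (insert (fm N A) Γ) Δ → Der (insert (fm P A) Γ) Δ →
      Der (insert (fm (.ifz M N P) A) Γ) Δ
  | okVarR (Γ Δ : Finset Formula) (x : ℕ) : Der Γ (insert (fm (.var x) .ok) Δ)
  | okL {Γ Δ M A} : Der (insert (fm M .ok) Γ) Δ → Der (insert (fm M A) Γ) Δ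
  | okR {Γ Δ M A} : Der Γ (insert (fm M A) Δ) → Der Γ (insert (fm M .ok) Δ)
  | okApL1 {Γ Δ M N A} : Der (insert (fm M (.narrow .ok A)) Γ) Δ →
      Der (insert (fm (.app M N) .ok) Γ) Δ
  | okApL2 {Γ Δ M N} : Der (insert (fm N .ok) Γ) Δ → Der (insert (fm (.app M N) .ok) Γ) Δ
  | okSL {Γ Δ M} : Der (insert (fm M .nat) Γ) Δ → Der (insert (fm (.succ M) .ok) Γ) Δ
  | okPL {Γ Δ M} : Der (insert (fm M .nat) Γ) Δ → Der (insert (fm (.pred M) .ok) Γ) Δ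
  | okPrL1 {Γ Δ M1 M2} : Der (insert (fm M1 .ok) Γ) Δ →
      Der (insert (fm (.pair M1 M2) .ok) Γ) Δ
  | okPrL2 {Γ Δ M1 M2} : Der (insert (fm M2 .ok) Γ) Δ →
      Der (insert (fm (.pair M1 M2) .ok) Γ) Δ

/-- Simultaneous substitution by a valuation (total substitution); suitable
since valuations map variables to closed terms. -/
def msubst (θ : ℕ → Tm) : Tm → Tm
  | .var y => θ y
  | .zero => .zero
  | .succ M => .succ (msubst θ M)
  | .pred M => .pred (msubst θ M)
  | .ifz M P Q => .ifz (msubst θ M) (msubst θ P) (msubst θ Q)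
  | .abs y M => .abs y (msubst (Function.update θ y (.var y)) M)
  | .app M P => .app (msubst θ M) (msubst θ P)
  | .fix y M => .fix y (msubst (Function.update θ y (.var y)) M)
  | .pair M P => .pair (msubst θ M) (msubst θ P)
  | .lett y z M P =>
      .lett y z (msubst θ M)
        (msubst (Function.update (Function.update θ y (.var y)) z (.var z)) P)

/-- A valuation: a substitution by closed terms. -/
def ClosedVal (θ : ℕ → Tm) : Prop := ∀ x, ClosedTm (θ x)

/-- `θ` satisfies `M : A` on the left: `Mθ ∈ T⟦A⟧`. -/
def SatL (θ : ℕ → Tm) (φ : Formula) : Prop := TSem (Sem φ.ty) (msubst θ φ.tm)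

/-- `θ` satisfies `M : A` on the right: `Mθ ∈ T̄⟦A⟧`. -/
def SatR (θ : ℕ → Tm) (φ : Formula) : Prop := TBarSem (Sem φ.ty) (msubst θ φ.tm)

/-- Truth of a judgement: `Γ ⊨ Δ`. -/
def Models (Γ Δ : Finset Formula) : Prop :=
  ∀ θ : ℕ → Tm, ClosedVal θ → (∀ φ ∈ Γ, SatL θ φ) → ∃ φ ∈ Δ, SatR θ φ


/-! ### Auxiliary development for the fixpoint theorem -/

section FixAux

open Relation

/-! #### Basic facts about values, numerals, free variables, substitution -/

theorem numeral_succ_def (n : ℕ) : numeral (n+1) = .succ (numeral n) := rfl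

theorem numeral_no_step : ∀ n {t : Tm}, ¬ Step (numeral n) t := by
  intro n
  induction n with
  | zero => intro t h; cases h
  | succ n ih => intro t h; cases h with
    | succ_ctx h' => exact ih h'

theorem IsValue.normal {v : Tm} (h : IsValue v) : NormalForm v := by
  induction h with
  | var x => rintro ⟨t, ht⟩; cases ht
  | num n => rintro ⟨t, ht⟩; exact numeral_no_step n ht
  | abs x m => rintro ⟨t, ht⟩; cases ht
  | pair hV hW ihV ihW =>
    rintro ⟨t, ht⟩
    cases ht with
    | pair_left h' => exact ihV ⟨_, h'⟩
    | pair_right _ h' => exact ihW ⟨_, h'⟩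

theorem IsValue.not_step {v t : Tm} (h : IsValue v) (h' : Step v t) : False :=
  h.normal ⟨t, h'⟩

theorem numeral_ne_fix (n : ℕ) (y : ℕ) (m : Tm) : numeral n ≠ .fix y m := by
  cases n <;> simp [numeral]

theorem numeral_ne_pair (n : ℕ) (a b : Tm) : numeral n ≠ .pair a b := by
  cases n <;> simp [numeral]

theorem numeral_ne_abs (n : ℕ) (y : ℕ) (m : Tm) : numeral n ≠ .abs y m := by
  cases n <;> simp [numeral]

theorem numeral_ne_app (n : ℕ) (a b : Tm) : numeral n ≠ .app a b := by
  cases n <;> simp [numeral]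

theorem not_isValue_fix (y : ℕ) (m : Tm) : ¬ IsValue (.fix y m) := by
  intro h
  generalize hE : Tm.fix y m = t at h
  cases h <;> try (cases hE)
  case num n => exact numeral_ne_fix n y m hE.symm

theorem fix_steps (y : ℕ) (m : Tm) : Step (.fix y m) (subst y (.fix y m) m) :=
  Step.fix_step

/-! #### Substitution and free variables -/

theorem subst_of_not_mem_fv {x : ℕ} {V : Tm} : ∀ {N : Tm}, x ∉ fv N → subst x V N = N := by
  intro N
  induction N with
  | var y =>
    intro h; simp only [fv, Finset.mem_singleton] at h
    simp [subst, show ¬ y = x from fun hh => h hh.symm]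
  | zero => intro _; rfl
  | succ M ih => intro h; simp only [fv] at h; simp [subst, ih h]
  | pred M ih => intro h; simp only [fv] at h; simp [subst, ih h]
  | ifz M P Q ihM ihP ihQ =>
    intro h; simp only [fv, Finset.mem_union, not_or] at h
    simp [subst, ihM h.1.1, ihP h.1.2, ihQ h.2]
  | abs y M ih =>
    intro h; simp only [fv, Finset.mem_sdiff, Finset.mem_singleton] at h
    by_cases hy : y = x
    · simp [subst, hy]
    · have : x ∉ fv M := by
        intro hx; exact h ⟨hx, by omega⟩
      simp [subst, hy, ih this]
  | app M P ihM ihP =>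
    intro h; simp only [fv, Finset.mem_union, not_or] at h
    simp [subst, ihM h.1, ihP h.2]
  | fix y M ih =>
    intro h; simp only [fv, Finset.mem_sdiff, Finset.mem_singleton] at h
    by_cases hy : y = x
    · simp [subst, hy]
    · have : x ∉ fv M := fun hx => h ⟨hx, by omega⟩
      simp [subst, hy, ih this]
  | pair M P ihM ihP =>
    intro h; simp only [fv, Finset.mem_union, not_or] at h
    simp [subst, ihM h.1, ihP h.2]
  | lett y z M P ihM ihP =>
    intro h; simp only [fv, Finset.mem_union, Finset.mem_sdiff, Finset.mem_insert,
      Finset.mem_singleton, not_or] at h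
    by_cases hyz : y = x ∨ z = x
    · simp [subst, if_pos hyz, ihM h.1]
    · push_neg at hyz
      obtain ⟨h1, h2⟩ := hyz
      have hP : x ∉ fv P := fun hx => h.2 ⟨hx, by omega, by omega⟩
      have : ¬ (y = x ∨ z = x) := by omega
      simp [subst, if_neg this, ihM h.1, ihP hP]

theorem mem_fv_subst {x : ℕ} {V : Tm} : ∀ {N : Tm} {a : ℕ},
    a ∈ fv (subst x V N) → (a ∈ fv N ∧ a ≠ x) ∨ a ∈ fv V := by
  intro N
  induction N with
  | var y =>
    intro a ha
    by_cases hy : y = x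
    · right; simpa [subst, hy] using ha
    · left
      simp only [subst, if_neg hy, fv, Finset.mem_singleton] at ha ⊢
      omega
  | zero => intro a ha; simp [subst, fv] at ha
  | succ M ih => intro a ha; exact ih ha
  | pred M ih => intro a ha; exact ih ha
  | ifz M P Q ihM ihP ihQ =>
    intro a ha
    simp only [subst, fv, Finset.mem_union] at ha
    rcases ha with (ha | ha) | ha
    · rcases ihM ha with h | h
      · exact Or.inl ⟨by simp [fv, h.1], h.2⟩
      · exact Or.inr h
    · rcases ihP ha with h | h
      · exact Or.inl ⟨by simp [fv, h.1], h.2⟩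
      · exact Or.inr h
    · rcases ihQ ha with h | h
      · exact Or.inl ⟨by simp [fv, h.1], h.2⟩
      · exact Or.inr h
  | abs y M ih =>
    intro a ha
    by_cases hy : y = x
    · left
      simp only [subst, if_pos hy, fv, Finset.mem_sdiff, Finset.mem_singleton] at ha
      exact ⟨by simp [fv, Finset.mem_sdiff, ha.1, ha.2], by omega⟩
    · simp only [subst, if_neg hy, fv, Finset.mem_sdiff, Finset.mem_singleton] at ha
      rcases ih ha.1 with h | h
      · exact Or.inl ⟨by simp [fv, Finset.mem_sdiff]; exact ⟨h.1, ha.2⟩, h.2⟩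
      · exact Or.inr h
  | app M P ihM ihP =>
    intro a ha
    simp only [subst, fv, Finset.mem_union] at ha
    rcases ha with ha | ha
    · rcases ihM ha with h | h
      · exact Or.inl ⟨by simp [fv, h.1], h.2⟩
      · exact Or.inr h
    · rcases ihP ha with h | h
      · exact Or.inl ⟨by simp [fv, h.1], h.2⟩
      · exact Or.inr h
  | fix y M ih =>
    intro a ha
    by_cases hy : y = x
    · left
      simp only [subst, if_pos hy, fv, Finset.mem_sdiff, Finset.mem_singleton] at ha
      exact ⟨by simp [fv, Finset.mem_sdiff, ha.1, ha.2], by omega⟩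
    · simp only [subst, if_neg hy, fv, Finset.mem_sdiff, Finset.mem_singleton] at ha
      rcases ih ha.1 with h | h
      · exact Or.inl ⟨by simp [fv, Finset.mem_sdiff]; exact ⟨h.1, ha.2⟩, h.2⟩
      · exact Or.inr h
  | pair M P ihM ihP =>
    intro a ha
    simp only [subst, fv, Finset.mem_union] at ha
    rcases ha with ha | ha
    · rcases ihM ha with h | h
      · exact Or.inl ⟨by simp [fv, h.1], h.2⟩
      · exact Or.inr h
    · rcases ihP ha with h | h
      · exact Or.inl ⟨by simp [fv, h.1], h.2⟩
      · exact Or.inr h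
  | lett y z M P ihM ihP =>
    intro a ha
    by_cases hyz : y = x ∨ z = x
    · simp only [subst, if_pos hyz, fv, Finset.mem_union] at ha
      rcases ha with ha | ha
      · rcases ihM ha with h | h
        · exact Or.inl ⟨by simp [fv, h.1], h.2⟩
        · exact Or.inr h
      · left
        simp only [Finset.mem_sdiff, Finset.mem_insert, Finset.mem_singleton] at ha
        refine ⟨?_, ?_⟩
        · simp only [fv, Finset.mem_union, Finset.mem_sdiff, Finset.mem_insert,
            Finset.mem_singleton]
          exact Or.inr ⟨ha.1, ha.2⟩
        rcases hyz with rfl | rfl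
        · exact fun hax => ha.2 (Or.inl hax)
        · exact fun hax => ha.2 (Or.inr hax)
    · simp only [subst, if_neg hyz, fv, Finset.mem_union] at ha
      rcases ha with ha | ha
      · rcases ihM ha with h | h
        · exact Or.inl ⟨by simp [fv, h.1], h.2⟩
        · exact Or.inr h
      · simp only [Finset.mem_sdiff, Finset.mem_insert, Finset.mem_singleton] at ha
        rcases ihP ha.1 with h | h
        · refine Or.inl ⟨?_, h.2⟩
          simp only [fv, Finset.mem_union, Finset.mem_sdiff, Finset.mem_insert,
            Finset.mem_singleton]
          exact Or.inr ⟨h.1, ha.2⟩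
        · exact Or.inr h

theorem fv_step_subset {a b : Tm} (h : Step a b) : fv b ⊆ fv a := by
  induction h with
  | ifz_zero => intro t ht; simp [fv]; tauto
  | ifz_succ => intro t ht; simp [fv]; tauto
  | lett_beta hV hW =>
    intro t ht
    rcases mem_fv_subst ht with h1 | h1
    · rcases mem_fv_subst h1.1 with h2 | h2
      · simp only [fv, Finset.mem_union, Finset.mem_sdiff, Finset.mem_insert,
          Finset.mem_singleton]
        right
        refine ⟨h2.1, ?_⟩
        push_neg
        exact ⟨h2.2, h1.2⟩
      · simp [fv]; tauto
    · simp [fv]; tauto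
  | fix_step =>
    intro t ht
    rcases mem_fv_subst ht with h1 | h1
    · simp only [fv, Finset.mem_sdiff, Finset.mem_singleton]
      exact ⟨h1.1, fun hh => h1.2 hh⟩
    · simpa [fv] using h1
  | pred_zero => intro t ht; simpa [fv] using ht
  | pred_succ => intro t ht; simp only [fv]; simpa [numeral_succ_def, fv] using ht
  | beta hV =>
    intro t ht
    rcases mem_fv_subst ht with h1 | h1
    · simp only [fv, Finset.mem_union, Finset.mem_sdiff, Finset.mem_singleton]
      exact Or.inl ⟨h1.1, fun hh => h1.2 hh⟩
    · simp [fv]; tauto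
  | succ_ctx h ih => exact ih
  | pred_ctx h ih => exact ih
  | pair_left h ih => intro t ht; simp only [fv, Finset.mem_union] at ht ⊢; tauto
  | pair_right hV h ih => intro t ht; simp only [fv, Finset.mem_union] at ht ⊢; tauto
  | lett_ctx h ih => intro t ht; simp only [fv, Finset.mem_union] at ht ⊢; tauto
  | ifz_ctx h ih => intro t ht; simp only [fv, Finset.mem_union] at ht ⊢; tauto
  | app_right h ih => intro t ht; simp only [fv, Finset.mem_union] at ht ⊢; tauto
  | app_left h ih => intro t ht; simp only [fv, Finset.mem_union] at ht ⊢; tauto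

theorem step_closed {a b : Tm} (h : Step a b) (ha : ClosedTm a) : ClosedTm b := by
  have := fv_step_subset h
  unfold ClosedTm at *
  rw [ha] at this
  exact Finset.subset_empty.mp this

theorem steps_closed {a b : Tm} (h : Steps a b) (ha : ClosedTm a) : ClosedTm b := by
  induction h with
  | refl => exact ha
  | tail _ hstep ih => exact step_closed hstep ih

theorem closed_subst {x : ℕ} {V N : Tm} (hN : fv N ⊆ {x}) (hV : ClosedTm V) :
    ClosedTm (subst x V N) := by
  unfold ClosedTm at *
  rw [Finset.eq_empty_iff_forall_notMem]
  intro a ha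
  rcases mem_fv_subst ha with h | h
  · have := hN h.1; simp at this; exact h.2 this
  · rw [hV] at h; simp at h

/-! #### Step counting -/

inductive StepN : ℕ → Tm → Tm → Prop
  | refl (a : Tm) : StepN 0 a a
  | head {a b c : Tm} {n : ℕ} : Step a b → StepN n b c → StepN (n+1) a c

theorem StepN.toSteps {n : ℕ} {a b : Tm} (h : StepN n a b) : Steps a b := by
  induction h with
  | refl => exact Relation.ReflTransGen.refl
  | head hstep _ ih => exact Relation.ReflTransGen.head hstep ih

theorem StepN.snoc {n : ℕ} {a b c : Tm} (h : StepN n a b) (h2 : Step b c) :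
    StepN (n+1) a c := by
  induction h with
  | refl => exact StepN.head h2 (StepN.refl _)
  | head hstep _ ih => exact StepN.head hstep (ih h2)

theorem steps_stepN {a b : Tm} (h : Steps a b) : ∃ n, StepN n a b := by
  induction h with
  | refl => exact ⟨0, StepN.refl _⟩
  | tail _ hstep ih => obtain ⟨n, hn⟩ := ih; exact ⟨n+1, hn.snoc hstep⟩

/-! #### Determinism -/

theorem numeral_inj : ∀ {a b : ℕ}, numeral a = numeral b → a = b := by
  intro a
  induction a with
  | zero =>
    intro b h
    cases b with
    | zero => rfl
    | succ b => exact absurd h (by simp [numeral])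
  | succ a ih =>
    intro b h
    cases b with
    | zero => exact absurd h (by simp [numeral])
    | succ b => simp only [numeral, Tm.succ.injEq] at h; rw [ih h]

theorem step_det {a b c : Tm} (h1 : Step a b) (h2 : Step a c) : b = c := by
  induction h1 generalizing c with
  | ifz_zero =>
    cases h2 with
    | ifz_zero => rfl
    | ifz_ctx h => exact absurd h (numeral_no_step 0)
  | ifz_succ =>
    rename_i n N P
    generalize hg : numeral (n+1) = g at h2
    cases h2 with
    | ifz_zero => have := numeral_inj hg; omega
    | ifz_succ => rfl
    | ifz_ctx h => rw [← hg] at h; exact absurd h (numeral_no_step _)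
  | lett_beta hV hW =>
    cases h2 with
    | lett_beta => rfl
    | lett_ctx h => exact absurd h ((IsValue.pair hV hW).not_step)
  | fix_step => cases h2 with | fix_step => rfl
  | pred_zero =>
    cases h2 with
    | pred_zero => rfl
    | pred_ctx h => exact absurd h (numeral_no_step 0)
  | pred_succ =>
    rename_i n
    generalize hg : numeral (n+1) = g at h2
    cases h2 with
    | pred_zero => have := numeral_inj hg; omega
    | pred_succ =>
      rename_i m
      have hnm : n = m := by have := numeral_inj hg; omega
      rw [hnm]
    | pred_ctx h => rw [← hg] at h; exact absurd h (numeral_no_step _)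
  | beta hV =>
    cases h2 with
    | beta => rfl
    | app_right h => exact absurd h hV.not_step
    | app_left h => cases h
  | succ_ctx h ih => cases h2 with | succ_ctx h' => rw [ih h']
  | pred_ctx h ih =>
    cases h2 with
    | pred_zero => exact absurd h (numeral_no_step 0)
    | pred_succ => exact absurd h (numeral_no_step _)
    | pred_ctx h' => rw [ih h']
  | pair_left h ih =>
    cases h2 with
    | pair_left h' => rw [ih h']
    | pair_right hV _ => exact absurd h hV.not_step
  | pair_right hV h ih =>
    cases h2 with
    | pair_left h' => exact absurd h' hV.not_step
    | pair_right _ h' => rw [ih h']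
  | lett_ctx h ih =>
    cases h2 with
    | lett_beta hV hW => exact absurd h ((IsValue.pair hV hW).not_step)
    | lett_ctx h' => rw [ih h']
  | ifz_ctx h ih =>
    cases h2 with
    | ifz_zero => exact absurd h (numeral_no_step 0)
    | ifz_succ => exact absurd h (numeral_no_step _)
    | ifz_ctx h' => rw [ih h']
  | app_right h ih =>
    cases h2 with
    | beta hV => exact absurd h hV.not_step
    | app_right h' => rw [ih h']
    | app_left h' => cases h'
  | app_left h ih =>
    cases h2 with
    | beta _ => cases h
    | app_right _ => cases h
    | app_left h' => rw [ih h']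

theorem steps_nf_steps {a b : Tm} (hab : Steps a b) :
    ∀ {c : Tm}, Steps a c → NormalForm c → Steps b c := by
  induction hab with
  | refl => intro c h _; exact h
  | tail _ hstep ih =>
    intro c hac hc
    rename_i b' b _
    have hb'c : Steps b' c := ih hac hc
    rcases (Relation.ReflTransGen.cases_head hb'c) with rfl | ⟨d, hd, hdc⟩
    · exact absurd ⟨_, hstep⟩ hc
    · rw [step_det hstep hd]; exact hdc

theorem nf_unique {a b c : Tm} (h1 : Steps a b) (h2 : Steps a c)
    (hb : NormalForm b) (hc : NormalForm c) : b = c := by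
  have h := steps_nf_steps h1 h2 hc
  rcases Relation.ReflTransGen.cases_head h with rfl | ⟨d, hd, _⟩
  · rfl
  · exact absurd ⟨_, hd⟩ hb

/-! #### divTm facts -/

theorem div_step {t : Tm} (h : Step divTm t) : t = divTm := by
  cases h
  simp [divTm, subst]

theorem div_steps {t : Tm} (h : Steps divTm t) : t = divTm := by
  induction h with
  | refl => rfl
  | tail _ hstep ih => subst ih; exact div_step hstep

theorem div_diverges : Diverges divTm := by
  rintro ⟨N, hsteps, hnf⟩
  rw [div_steps hsteps] at hnf
  exact hnf ⟨_, Step.fix_step⟩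

theorem div_closed : ClosedTm divTm := by
  simp [ClosedTm, divTm, fv]

theorem numeral_closed (n : ℕ) : fv (numeral n) = ∅ := by
  induction n with
  | zero => rfl
  | succ n ih => simpa [numeral, fv] using ih

theorem FSem_isValue : ∀ {F : FTy} {W : Tm}, FSem F W → IsValue W := by
  intro F
  induction F with
  | nat => rintro W ⟨n, rfl⟩; exact IsValue.num n
  | prod F1 F2 ih1 ih2 =>
    rintro W ⟨V, W', rfl, h1, h2⟩
    exact IsValue.pair (ih1 h1) (ih2 h2)

theorem FSem_closed : ∀ {F : FTy} {W : Tm}, FSem F W → ClosedTm W := by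
  intro F
  induction F with
  | nat => rintro W ⟨n, rfl⟩; exact numeral_closed n
  | prod F1 F2 ih1 ih2 =>
    rintro W ⟨V, W', rfl, h1, h2⟩
    have := ih1 h1; have := ih2 h2
    simp_all [ClosedTm, fv]

/-! #### Normal form structural lemmas -/

theorem nf_succ {a : Tm} (h : NormalForm (.succ a)) : NormalForm a :=
  fun ⟨t, ht⟩ => h ⟨_, Step.succ_ctx ht⟩

theorem nf_pair_left {a b : Tm} (h : NormalForm (.pair a b)) : NormalForm a :=
  fun ⟨t, ht⟩ => h ⟨_, Step.pair_left ht⟩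

theorem nf_pair_right {a b : Tm} (h : NormalForm (.pair a b)) (ha : IsValue a) :
    NormalForm b :=
  fun ⟨t, ht⟩ => h ⟨_, Step.pair_right ha ht⟩

theorem nf_fix_false {y : ℕ} {m : Tm} (h : NormalForm (.fix y m)) : False :=
  h ⟨_, Step.fix_step⟩

/-! #### Lifting `Steps` through evaluation frames -/

theorem steps_succ {a b : Tm} (h : Steps a b) : Steps (.succ a) (.succ b) :=
  Relation.ReflTransGen.lift Tm.succ (fun _ _ hs => Step.succ_ctx hs) _ _ h

theorem steps_pred {a b : Tm} (h : Steps a b) : Steps (.pred a) (.pred b) :=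
  Relation.ReflTransGen.lift Tm.pred (fun _ _ hs => Step.pred_ctx hs) _ _ h

theorem steps_pair_left {a b N : Tm} (h : Steps a b) : Steps (.pair a N) (.pair b N) :=
  Relation.ReflTransGen.lift (fun t => Tm.pair t N) (fun _ _ hs => Step.pair_left hs) _ _ h

theorem steps_pair_right {V a b : Tm} (hV : IsValue V) (h : Steps a b) :
    Steps (.pair V a) (.pair V b) :=
  Relation.ReflTransGen.lift (fun t => Tm.pair V t) (fun _ _ hs => Step.pair_right hV hs) _ _ h

theorem steps_ifz {a b N P : Tm} (h : Steps a b) : Steps (.ifz a N P) (.ifz b N P) :=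
  Relation.ReflTransGen.lift (fun t => Tm.ifz t N P) (fun _ _ hs => Step.ifz_ctx hs) _ _ h

theorem steps_lett {y z : ℕ} {a b N : Tm} (h : Steps a b) :
    Steps (.lett y z a N) (.lett y z b N) :=
  Relation.ReflTransGen.lift (fun t => Tm.lett y z t N) (fun _ _ hs => Step.lett_ctx hs) _ _ h

theorem steps_app_left {a b N : Tm} (h : Steps a b) : Steps (.app a N) (.app b N) :=
  Relation.ReflTransGen.lift (fun t => Tm.app t N) (fun _ _ hs => Step.app_left hs) _ _ h

theorem steps_app_right {y : ℕ} {m a b : Tm} (h : Steps a b) :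
    Steps (.app (.abs y m) a) (.app (.abs y m) b) :=
  Relation.ReflTransGen.lift (fun t => Tm.app (.abs y m) t)
    (fun _ _ hs => Step.app_right hs) _ _ h

/-! #### The congruence closure of a slot relation -/

inductive CR (S : Tm → Tm → Prop) : Tm → Tm → Prop
  | slot {a b} : S a b → CR S a b
  | var (y : ℕ) : CR S (.var y) (.var y)
  | zero : CR S .zero .zero
  | succ {a b} : CR S a b → CR S (.succ a) (.succ b)
  | pred {a b} : CR S a b → CR S (.pred a) (.pred b)
  | ifz {a b a1 b1 a2 b2} : CR S a b → CR S a1 b1 → CR S a2 b2 →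
      CR S (.ifz a a1 a2) (.ifz b b1 b2)
  | abs (y : ℕ) {a b} : CR S a b → CR S (.abs y a) (.abs y b)
  | app {a b a1 b1} : CR S a b → CR S a1 b1 → CR S (.app a a1) (.app b b1)
  | fix (y : ℕ) {a b} : CR S a b → CR S (.fix y a) (.fix y b)
  | pair {a b a1 b1} : CR S a b → CR S a1 b1 → CR S (.pair a a1) (.pair b b1)
  | lett (y z : ℕ) {a b a1 b1} : CR S a b → CR S a1 b1 →
      CR S (.lett y z a a1) (.lett y z b b1)

variable {S : Tm → Tm → Prop}

theorem CR.refl (S : Tm → Tm → Prop) : ∀ a : Tm, CR S a a := by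
  intro a
  induction a with
  | var y => exact CR.var y
  | zero => exact CR.zero
  | succ a ih => exact CR.succ ih
  | pred a ih => exact CR.pred ih
  | ifz a b c iha ihb ihc => exact CR.ifz iha ihb ihc
  | abs y a ih => exact CR.abs y ih
  | app a b iha ihb => exact CR.app iha ihb
  | fix y a ih => exact CR.fix y ih
  | pair a b iha ihb => exact CR.pair iha ihb
  | lett y z a b iha ihb => exact CR.lett y z iha ihb

theorem CR.mono {S' : Tm → Tm → Prop} (hSS : ∀ a b, S a b → S' a b) :
    ∀ {a b : Tm}, CR S a b → CR S' a b := by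
  intro a b h
  induction h with
  | slot hs => exact CR.slot (hSS _ _ hs)
  | var y => exact CR.var y
  | zero => exact CR.zero
  | succ _ ih => exact CR.succ ih
  | pred _ ih => exact CR.pred ih
  | ifz _ _ _ ih1 ih2 ih3 => exact CR.ifz ih1 ih2 ih3
  | abs y _ ih => exact CR.abs y ih
  | app _ _ ih1 ih2 => exact CR.app ih1 ih2
  | fix y _ ih => exact CR.fix y ih
  | pair _ _ ih1 ih2 => exact CR.pair ih1 ih2
  | lett y z _ _ ih1 ih2 => exact CR.lett y z ih1 ih2

theorem subst_closed_id {N : Tm} (h : ClosedTm N) (y : ℕ) (v : Tm) :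
    subst y v N = N :=
  subst_of_not_mem_fv (by rw [ClosedTm] at h; simp [h])

theorem CR.substc (hcl : ∀ a b, S a b → ClosedTm a ∧ ClosedTm b)
    {p p' : Tm} (hp : CR S p p') :
    ∀ {v v' : Tm}, CR S v v' → ∀ (y : ℕ), CR S (subst y v p) (subst y v' p') := by
  induction hp with
  | slot hs =>
    intro v v' _ y
    rw [subst_closed_id (hcl _ _ hs).1, subst_closed_id (hcl _ _ hs).2]
    exact CR.slot hs
  | var z =>
    intro v v' hv y
    by_cases hz : z = y
    · simpa [subst, hz] using hv
    · simp [subst, hz]; exact CR.var z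
  | zero => intro v v' _ y; exact CR.zero
  | succ _ ih => intro v v' hv y; exact CR.succ (ih hv y)
  | pred _ ih => intro v v' hv y; exact CR.pred (ih hv y)
  | ifz _ _ _ ih1 ih2 ih3 =>
    intro v v' hv y
    exact CR.ifz (ih1 hv y) (ih2 hv y) (ih3 hv y)
  | abs z hq ih =>
    intro v v' hv y
    by_cases hz : z = y
    · simp only [subst, if_pos hz]
      exact CR.abs z (by assumption)
    · simp only [subst, if_neg hz]
      exact CR.abs z (ih hv y)
  | app _ _ ih1 ih2 => intro v v' hv y; exact CR.app (ih1 hv y) (ih2 hv y)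
  | fix z hq ih =>
    intro v v' hv y
    by_cases hz : z = y
    · simp only [subst, if_pos hz]
      exact CR.fix z (by assumption)
    · simp only [subst, if_neg hz]
      exact CR.fix z (ih hv y)
  | pair _ _ ih1 ih2 => intro v v' hv y; exact CR.pair (ih1 hv y) (ih2 hv y)
  | lett z w hq1 hq2 ih1 ih2 =>
    intro v v' hv y
    by_cases hzw : z = y ∨ w = y
    · simp only [subst, if_pos hzw]
      exact CR.lett z w (ih1 hv y) (by assumption)
    · simp only [subst, if_neg hzw]
      exact CR.lett z w (ih1 hv y) (ih2 hv y)

/-! #### Numeral and value transfer across `CR` -/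

theorem CR.numL (hval : ∀ a b, S a b → IsValue a → a = b) :
    ∀ {n : ℕ} {b : Tm}, CR S (numeral n) b → b = numeral n := by
  intro n
  induction n with
  | zero =>
    intro b h
    have h' : CR S Tm.zero b := h
    cases h' with
    | slot hs => exact (hval _ _ hs (IsValue.num 0)).symm
    | zero => rfl
  | succ n ih =>
    intro b h
    rw [numeral_succ_def] at h
    cases h with
    | slot hs => exact (hval _ _ hs (IsValue.num (n+1))).symm
    | succ hc => simp [numeral_succ_def, ih hc]

theorem CR.numL_nfb (hnfb : ∀ a b, S a b → NormalForm b → False) :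
    ∀ {n : ℕ} {b : Tm}, CR S (numeral n) b → NormalForm b → b = numeral n := by
  intro n
  induction n with
  | zero =>
    intro b h hb
    have h' : CR S Tm.zero b := h
    cases h' with
    | slot hs => exact absurd hb (fun hh => hnfb _ _ hs hh)
    | zero => rfl
  | succ n ih =>
    intro b h hb
    rw [numeral_succ_def] at h
    cases h with
    | slot hs => exact absurd hb (fun hh => hnfb _ _ hs hh)
    | succ hc => simp [numeral_succ_def, ih hc (nf_succ hb)]

theorem CR.numR_nfa (hnf : ∀ a b, S a b → NormalForm a → a = b) :
    ∀ {n : ℕ} {a : Tm}, CR S a (numeral n) → NormalForm a → a = numeral n := by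
  intro n
  induction n with
  | zero =>
    intro a h ha
    have h' : CR S a Tm.zero := h
    cases h' with
    | slot hs => exact hnf _ _ hs ha
    | zero => rfl
  | succ n ih =>
    intro a h ha
    rw [numeral_succ_def] at h
    cases h with
    | slot hs => exact hnf _ _ hs ha
    | succ hc => simp [numeral_succ_def, ih hc (nf_succ ha)]

theorem CR.numR_fix (hfix : ∀ a b, S a b → ∃ y m, b = Tm.fix y m) :
    ∀ {n : ℕ} {a : Tm}, CR S a (numeral n) → a = numeral n := by
  intro n
  induction n with
  | zero =>
    intro a h
    have h' : CR S a Tm.zero := h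
    cases h' with
    | slot hs => obtain ⟨y, m, hy⟩ := hfix _ _ hs; cases hy
    | zero => rfl
  | succ n ih =>
    intro a h
    rw [numeral_succ_def] at h
    cases h with
    | slot hs => obtain ⟨y, m, hy⟩ := hfix _ _ hs; cases hy
    | succ hc => simp [numeral_succ_def, ih hc]

theorem CR.numL_or (hbstep : ∀ a b, S a b → ∃ t, Step b t) :
    ∀ {n : ℕ} {b : Tm}, CR S (numeral n) b → b = numeral n ∨ ∃ t, Step b t := by
  intro n
  induction n with
  | zero =>
    intro b h
    have h' : CR S Tm.zero b := h
    cases h' with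
    | slot hs => exact Or.inr (hbstep _ _ hs)
    | zero => exact Or.inl rfl
  | succ n ih =>
    intro b h
    rw [numeral_succ_def] at h
    cases h with
    | slot hs => exact Or.inr (hbstep _ _ hs)
    | succ hc =>
      rcases ih hc with rfl | ⟨t, ht⟩
      · exact Or.inl (by simp [numeral_succ_def])
      · exact Or.inr ⟨_, Step.succ_ctx ht⟩

theorem CR.valL (hval : ∀ a b, S a b → IsValue a → a = b) :
    ∀ {v v' : Tm}, CR S v v' → IsValue v → IsValue v' := by
  intro v v' hcr hv
  induction hv generalizing v' with
  | var y =>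
    cases hcr with
    | slot hs => rw [← hval _ _ hs (IsValue.var y)]; exact IsValue.var y
    | var => exact IsValue.var y
  | num n => rw [CR.numL hval hcr]; exact IsValue.num n
  | pair hV hW ihV ihW =>
    cases hcr with
    | slot hs => rw [← hval _ _ hs (IsValue.pair hV hW)]; exact IsValue.pair hV hW
    | pair h1 h2 => exact IsValue.pair (ihV h1) (ihW h2)
  | abs y m =>
    cases hcr with
    | slot hs => rw [← hval _ _ hs (IsValue.abs y m)]; exact IsValue.abs y m
    | abs _ _ => exact IsValue.abs _ _

theorem CR.valL_or (hbstep : ∀ a b, S a b → ∃ t, Step b t) :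
    ∀ {v v' : Tm}, CR S v v' → IsValue v → IsValue v' ∨ ∃ t, Step v' t := by
  intro v v' hcr hv
  induction hv generalizing v' with
  | var y =>
    cases hcr with
    | slot hs => exact Or.inr (hbstep _ _ hs)
    | var => exact Or.inl (IsValue.var y)
  | num n =>
    rcases CR.numL_or hbstep hcr with rfl | h
    · exact Or.inl (IsValue.num n)
    · exact Or.inr h
  | pair hV hW ihV ihW =>
    cases hcr with
    | slot hs => exact Or.inr (hbstep _ _ hs)
    | pair h1 h2 =>
      rcases ihV h1 with h | ⟨t, ht⟩
      · rcases ihW h2 with h' | ⟨t, ht⟩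
        · exact Or.inl (IsValue.pair h h')
        · exact Or.inr ⟨_, Step.pair_right h ht⟩
      · exact Or.inr ⟨_, Step.pair_left ht⟩
  | abs y m =>
    cases hcr with
    | slot hs => exact Or.inr (hbstep _ _ hs)
    | abs _ _ => exact Or.inl (IsValue.abs _ _)

theorem CR.valR_nf (hnf : ∀ a b, S a b → NormalForm a → a = b) :
    ∀ {v v' : Tm}, CR S v v' → NormalForm v → IsValue v' → IsValue v := by
  intro v v' hcr hn hv
  induction hv generalizing v with
  | var y =>
    cases hcr with
    | slot hs => rw [hnf _ _ hs hn]; exact IsValue.var y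
    | var => exact IsValue.var y
  | num n => rw [CR.numR_nfa hnf hcr hn]; exact IsValue.num n
  | pair hV hW ihV ihW =>
    cases hcr with
    | slot hs => rw [hnf _ _ hs hn]; exact IsValue.pair hV hW
    | pair h1 h2 =>
      have hv1 := ihV h1 (nf_pair_left hn)
      exact IsValue.pair hv1 (ihW h2 (nf_pair_right hn hv1))
  | abs y m =>
    cases hcr with
    | slot hs => rw [hnf _ _ hs hn]; exact IsValue.abs y m
    | abs _ _ => exact IsValue.abs _ _

theorem CR.valL_nfb (hnfb : ∀ a b, S a b → NormalForm b → False) :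
    ∀ {v v' : Tm}, CR S v v' → NormalForm v' → IsValue v → IsValue v' := by
  intro v v' hcr hn hv
  induction hv generalizing v' with
  | var y =>
    cases hcr with
    | slot hs => exact absurd hn (fun hh => hnfb _ _ hs hh)
    | var => exact IsValue.var y
  | num n => rw [CR.numL_nfb hnfb hcr hn]; exact IsValue.num n
  | pair hV hW ihV ihW =>
    cases hcr with
    | slot hs => exact absurd hn (fun hh => hnfb _ _ hs hh)
    | pair h1 h2 =>
      have hv1 := ihV h1 (nf_pair_left hn)
      exact IsValue.pair hv1 (ihW h2 (nf_pair_right hn hv1))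
  | abs y m =>
    cases hcr with
    | slot hs => exact absurd hn (fun hh => hnfb _ _ hs hh)
    | abs _ _ => exact IsValue.abs _ _

/-! #### Simulation lemmas -/

theorem CR.simL (hval : ∀ a b, S a b → IsValue a → a = b)
    (hstepS : ∀ a b a', S a b → Step a a' → S a' b)
    (hcl : ∀ a b, S a b → ClosedTm a ∧ ClosedTm b) :
    ∀ {a a' b : Tm}, CR S a b → Step a a' → ∃ b', Steps b b' ∧ CR S a' b' := by
  intro a a' b hcr hstep
  induction hstep generalizing b with
  | ifz_zero =>
    cases hcr with
    | slot hs => exact ⟨b, Relation.ReflTransGen.refl, CR.slot (hstepS _ _ _ hs Step.ifz_zero)⟩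
    | ifz hg hN hP =>
      obtain rfl := CR.numL hval hg
      exact ⟨_, Relation.ReflTransGen.single Step.ifz_zero, hN⟩
  | ifz_succ =>
    cases hcr with
    | slot hs => exact ⟨b, Relation.ReflTransGen.refl, CR.slot (hstepS _ _ _ hs Step.ifz_succ)⟩
    | ifz hg hN hP =>
      obtain rfl := CR.numL hval hg
      exact ⟨_, Relation.ReflTransGen.single Step.ifz_succ, hP⟩
  | lett_beta hV hW =>
    cases hcr with
    | slot hs =>
      exact ⟨b, Relation.ReflTransGen.refl, CR.slot (hstepS _ _ _ hs (Step.lett_beta hV hW))⟩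
    | lett _ _ hp hm =>
      cases hp with
      | slot hs2 =>
        obtain rfl := hval _ _ hs2 (IsValue.pair hV hW)
        exact ⟨_, Relation.ReflTransGen.single (Step.lett_beta hV hW),
          CR.substc hcl (CR.substc hcl hm (CR.refl S _) _) (CR.refl S _) _⟩
      | pair h1 h2 =>
        exact ⟨_, Relation.ReflTransGen.single
            (Step.lett_beta (CR.valL hval h1 hV) (CR.valL hval h2 hW)),
          CR.substc hcl (CR.substc hcl hm h1 _) h2 _⟩
  | fix_step =>
    cases hcr with
    | slot hs => exact ⟨b, Relation.ReflTransGen.refl, CR.slot (hstepS _ _ _ hs Step.fix_step)⟩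
    | fix _ hm =>
      exact ⟨_, Relation.ReflTransGen.single Step.fix_step,
        CR.substc hcl hm (CR.fix _ hm) _⟩
  | pred_zero =>
    cases hcr with
    | slot hs => exact ⟨b, Relation.ReflTransGen.refl, CR.slot (hstepS _ _ _ hs Step.pred_zero)⟩
    | pred hg =>
      obtain rfl := CR.numL hval hg
      exact ⟨_, Relation.ReflTransGen.single Step.pred_zero, CR.refl S _⟩
  | pred_succ =>
    cases hcr with
    | slot hs => exact ⟨b, Relation.ReflTransGen.refl, CR.slot (hstepS _ _ _ hs Step.pred_succ)⟩
    | pred hg =>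
      obtain rfl := CR.numL hval hg
      exact ⟨_, Relation.ReflTransGen.single Step.pred_succ, CR.refl S _⟩
  | beta hV =>
    cases hcr with
    | slot hs => exact ⟨b, Relation.ReflTransGen.refl, CR.slot (hstepS _ _ _ hs (Step.beta hV))⟩
    | app hf hv =>
      cases hf with
      | slot hs2 =>
        obtain rfl := hval _ _ hs2 (IsValue.abs _ _)
        exact ⟨_, Relation.ReflTransGen.single (Step.beta (CR.valL hval hv hV)),
          CR.substc hcl (CR.refl S _) hv _⟩
      | abs _ hm =>
        exact ⟨_, Relation.ReflTransGen.single (Step.beta (CR.valL hval hv hV)),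
          CR.substc hcl hm hv _⟩
  | succ_ctx h ih =>
    cases hcr with
    | slot hs => exact ⟨b, Relation.ReflTransGen.refl, CR.slot (hstepS _ _ _ hs (Step.succ_ctx h))⟩
    | succ hm =>
      obtain ⟨b2, hsteps, hc⟩ := ih hm
      exact ⟨_, steps_succ hsteps, CR.succ hc⟩
  | pred_ctx h ih =>
    cases hcr with
    | slot hs => exact ⟨b, Relation.ReflTransGen.refl, CR.slot (hstepS _ _ _ hs (Step.pred_ctx h))⟩
    | pred hm =>
      obtain ⟨b2, hsteps, hc⟩ := ih hm
      exact ⟨_, steps_pred hsteps, CR.pred hc⟩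
  | pair_left h ih =>
    cases hcr with
    | slot hs => exact ⟨b, Relation.ReflTransGen.refl, CR.slot (hstepS _ _ _ hs (Step.pair_left h))⟩
    | pair hm hn =>
      obtain ⟨b2, hsteps, hc⟩ := ih hm
      exact ⟨_, steps_pair_left hsteps, CR.pair hc hn⟩
  | pair_right hV h ih =>
    cases hcr with
    | slot hs =>
      exact ⟨b, Relation.ReflTransGen.refl, CR.slot (hstepS _ _ _ hs (Step.pair_right hV h))⟩
    | pair hv hn =>
      obtain ⟨b2, hsteps, hc⟩ := ih hn
      exact ⟨_, steps_pair_right (CR.valL hval hv hV) hsteps, CR.pair hv hc⟩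
  | lett_ctx h ih =>
    cases hcr with
    | slot hs => exact ⟨b, Relation.ReflTransGen.refl, CR.slot (hstepS _ _ _ hs (Step.lett_ctx h))⟩
    | lett _ _ hm hn =>
      obtain ⟨b2, hsteps, hc⟩ := ih hm
      exact ⟨_, steps_lett hsteps, CR.lett _ _ hc hn⟩
  | ifz_ctx h ih =>
    cases hcr with
    | slot hs => exact ⟨b, Relation.ReflTransGen.refl, CR.slot (hstepS _ _ _ hs (Step.ifz_ctx h))⟩
    | ifz hm hN hP =>
      obtain ⟨b2, hsteps, hc⟩ := ih hm
      exact ⟨_, steps_ifz hsteps, CR.ifz hc hN hP⟩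
  | app_right h ih =>
    cases hcr with
    | slot hs => exact ⟨b, Relation.ReflTransGen.refl, CR.slot (hstepS _ _ _ hs (Step.app_right h))⟩
    | app hf hn =>
      obtain ⟨b2, hsteps, hc⟩ := ih hn
      cases hf with
      | slot hs2 =>
        obtain rfl := hval _ _ hs2 (IsValue.abs _ _)
        exact ⟨_, steps_app_right hsteps, CR.app (CR.refl S _) hc⟩
      | abs _ hm => exact ⟨_, steps_app_right hsteps, CR.app (CR.abs _ hm) hc⟩
  | app_left h ih =>
    cases hcr with
    | slot hs => exact ⟨b, Relation.ReflTransGen.refl, CR.slot (hstepS _ _ _ hs (Step.app_left h))⟩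
    | app hf hn =>
      obtain ⟨b2, hsteps, hc⟩ := ih hf
      exact ⟨_, steps_app_left hsteps, CR.app hc hn⟩

theorem CR.simLs (hval : ∀ a b, S a b → IsValue a → a = b)
    (hstepS : ∀ a b a', S a b → Step a a' → S a' b)
    (hcl : ∀ a b, S a b → ClosedTm a ∧ ClosedTm b)
    {a a' b : Tm} (hcr : CR S a b) (hsteps : Steps a a') :
    ∃ b', Steps b b' ∧ CR S a' b' := by
  induction hsteps with
  | refl => exact ⟨b, Relation.ReflTransGen.refl, hcr⟩
  | tail _ hstep ih =>
    obtain ⟨b2, hs2, hc2⟩ := ih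
    obtain ⟨b3, hs3, hc3⟩ := CR.simL hval hstepS hcl hc2 hstep
    exact ⟨b3, hs2.trans hs3, hc3⟩

theorem CR.stepL_of_stepR (hnf : ∀ a b, S a b → NormalForm a → a = b) :
    ∀ {a b t : Tm}, CR S a b → Step b t → ∃ s, Step a s := by
  intro a b t hcr hstep
  induction hstep generalizing a with
  | ifz_zero =>
    cases hcr with
    | slot hs =>
      by_cases hn : NormalForm a
      · rw [hnf _ _ hs hn]; exact ⟨_, Step.ifz_zero⟩
      · exact not_not.mp hn
    | @ifz g _ _ _ _ _ hg hN hP =>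
      by_cases hng : NormalForm g
      · obtain rfl := CR.numR_nfa hnf hg hng
        exact ⟨_, Step.ifz_zero⟩
      · obtain ⟨g2, hg2⟩ := not_not.mp hng
        exact ⟨_, Step.ifz_ctx hg2⟩
  | ifz_succ =>
    cases hcr with
    | slot hs =>
      by_cases hn : NormalForm a
      · rw [hnf _ _ hs hn]; exact ⟨_, Step.ifz_succ⟩
      · exact not_not.mp hn
    | @ifz g _ _ _ _ _ hg hN hP =>
      by_cases hng : NormalForm g
      · obtain rfl := CR.numR_nfa hnf hg hng
        exact ⟨_, Step.ifz_succ⟩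
      · obtain ⟨g2, hg2⟩ := not_not.mp hng
        exact ⟨_, Step.ifz_ctx hg2⟩
  | lett_beta hV hW =>
    cases hcr with
    | slot hs =>
      by_cases hn : NormalForm a
      · rw [hnf _ _ hs hn]; exact ⟨_, Step.lett_beta hV hW⟩
      · exact not_not.mp hn
    | @lett _ _ p _ _ _ hp hm =>
      cases hp with
      | slot hs2 =>
        by_cases hn : NormalForm p
        · rw [hnf _ _ hs2 hn]; exact ⟨_, Step.lett_beta hV hW⟩
        · obtain ⟨p2, hp2⟩ := not_not.mp hn
          exact ⟨_, Step.lett_ctx hp2⟩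
      | @pair p1 _ p2 _ h1 h2 =>
        by_cases hn1 : NormalForm p1
        · have v1 := CR.valR_nf hnf h1 hn1 hV
          by_cases hn2 : NormalForm p2
          · exact ⟨_, Step.lett_beta v1 (CR.valR_nf hnf h2 hn2 hW)⟩
          · obtain ⟨q, hq⟩ := not_not.mp hn2
            exact ⟨_, Step.lett_ctx (Step.pair_right v1 hq)⟩
        · obtain ⟨q, hq⟩ := not_not.mp hn1
          exact ⟨_, Step.lett_ctx (Step.pair_left hq)⟩
  | fix_step =>
    cases hcr with
    | slot hs =>
      by_cases hn : NormalForm a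
      · rw [hnf _ _ hs hn]; exact ⟨_, Step.fix_step⟩
      · exact not_not.mp hn
    | fix _ hm => exact ⟨_, Step.fix_step⟩
  | pred_zero =>
    cases hcr with
    | slot hs =>
      by_cases hn : NormalForm a
      · rw [hnf _ _ hs hn]; exact ⟨_, Step.pred_zero⟩
      · exact not_not.mp hn
    | @pred g _ hg =>
      by_cases hng : NormalForm g
      · obtain rfl := CR.numR_nfa hnf hg hng
        exact ⟨_, Step.pred_zero⟩
      · obtain ⟨g2, hg2⟩ := not_not.mp hng
        exact ⟨_, Step.pred_ctx hg2⟩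
  | pred_succ =>
    cases hcr with
    | slot hs =>
      by_cases hn : NormalForm a
      · rw [hnf _ _ hs hn]; exact ⟨_, Step.pred_succ⟩
      · exact not_not.mp hn
    | @pred g _ hg =>
      by_cases hng : NormalForm g
      · obtain rfl := CR.numR_nfa hnf hg hng
        exact ⟨_, Step.pred_succ⟩
      · obtain ⟨g2, hg2⟩ := not_not.mp hng
        exact ⟨_, Step.pred_ctx hg2⟩
  | beta hV =>
    cases hcr with
    | slot hs =>
      by_cases hn : NormalForm a
      · rw [hnf _ _ hs hn]; exact ⟨_, Step.beta hV⟩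
      · exact not_not.mp hn
    | @app f _ v _ hf hv =>
      cases hf with
      | slot hs2 =>
        by_cases hn : NormalForm f
        · rw [hnf _ _ hs2 hn]
          by_cases hnv : NormalForm v
          · exact ⟨_, Step.beta (CR.valR_nf hnf hv hnv hV)⟩
          · obtain ⟨q, hq⟩ := not_not.mp hnv
            exact ⟨_, Step.app_right hq⟩
        · obtain ⟨q, hq⟩ := not_not.mp hn
          exact ⟨_, Step.app_left hq⟩
      | abs _ hm =>
        by_cases hnv : NormalForm v
        · exact ⟨_, Step.beta (CR.valR_nf hnf hv hnv hV)⟩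
        · obtain ⟨q, hq⟩ := not_not.mp hnv
          exact ⟨_, Step.app_right hq⟩
  | succ_ctx h ih =>
    cases hcr with
    | slot hs =>
      by_cases hn : NormalForm a
      · rw [hnf _ _ hs hn]; exact ⟨_, Step.succ_ctx h⟩
      · exact not_not.mp hn
    | succ hm =>
      obtain ⟨s, hx⟩ := ih hm
      exact ⟨_, Step.succ_ctx hx⟩
  | pred_ctx h ih =>
    cases hcr with
    | slot hs =>
      by_cases hn : NormalForm a
      · rw [hnf _ _ hs hn]; exact ⟨_, Step.pred_ctx h⟩
      · exact not_not.mp hn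
    | pred hm =>
      obtain ⟨s, hx⟩ := ih hm
      exact ⟨_, Step.pred_ctx hx⟩
  | pair_left h ih =>
    cases hcr with
    | slot hs =>
      by_cases hn : NormalForm a
      · rw [hnf _ _ hs hn]; exact ⟨_, Step.pair_left h⟩
      · exact not_not.mp hn
    | pair hm hn2 =>
      obtain ⟨s, hx⟩ := ih hm
      exact ⟨_, Step.pair_left hx⟩
  | pair_right hV h ih =>
    cases hcr with
    | slot hs =>
      by_cases hn : NormalForm a
      · rw [hnf _ _ hs hn]; exact ⟨_, Step.pair_right hV h⟩
      · exact not_not.mp hn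
    | @pair p1 _ p2 _ h1 h2 =>
      by_cases hn1 : NormalForm p1
      · obtain ⟨s, hx⟩ := ih h2
        exact ⟨_, Step.pair_right (CR.valR_nf hnf h1 hn1 hV) hx⟩
      · obtain ⟨q, hq⟩ := not_not.mp hn1
        exact ⟨_, Step.pair_left hq⟩
  | lett_ctx h ih =>
    cases hcr with
    | slot hs =>
      by_cases hn : NormalForm a
      · rw [hnf _ _ hs hn]; exact ⟨_, Step.lett_ctx h⟩
      · exact not_not.mp hn
    | lett _ _ hm hn2 =>
      obtain ⟨s, hx⟩ := ih hm
      exact ⟨_, Step.lett_ctx hx⟩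
  | ifz_ctx h ih =>
    cases hcr with
    | slot hs =>
      by_cases hn : NormalForm a
      · rw [hnf _ _ hs hn]; exact ⟨_, Step.ifz_ctx h⟩
      · exact not_not.mp hn
    | ifz hm hN hP =>
      obtain ⟨s, hx⟩ := ih hm
      exact ⟨_, Step.ifz_ctx hx⟩
  | app_right h ih =>
    cases hcr with
    | slot hs =>
      by_cases hn : NormalForm a
      · rw [hnf _ _ hs hn]; exact ⟨_, Step.app_right h⟩
      · exact not_not.mp hn
    | @app f _ v _ hf hv =>
      cases hf with
      | slot hs2 =>
        by_cases hn : NormalForm f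
        · rw [hnf _ _ hs2 hn]
          obtain ⟨s, hx⟩ := ih hv
          exact ⟨_, Step.app_right hx⟩
        · obtain ⟨q, hq⟩ := not_not.mp hn
          exact ⟨_, Step.app_left hq⟩
      | abs _ hm =>
        obtain ⟨s, hx⟩ := ih hv
        exact ⟨_, Step.app_right hx⟩
  | app_left h ih =>
    cases hcr with
    | slot hs =>
      by_cases hn : NormalForm a
      · rw [hnf _ _ hs hn]; exact ⟨_, Step.app_left h⟩
      · exact not_not.mp hn
    | app hf hv =>
      obtain ⟨s, hx⟩ := ih hf
      exact ⟨_, Step.app_left hx⟩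

theorem CR.stepR_of_stepL (hbstep : ∀ a b, S a b → ∃ t, Step b t) :
    ∀ {a b s : Tm}, CR S a b → Step a s → ∃ t, Step b t := by
  intro a b s hcr hstep
  induction hstep generalizing b with
  | ifz_zero =>
    cases hcr with
    | slot hs => exact hbstep _ _ hs
    | ifz hg hN hP =>
      rcases CR.numL_or hbstep hg with rfl | ⟨t, ht⟩
      · exact ⟨_, Step.ifz_zero⟩
      · exact ⟨_, Step.ifz_ctx ht⟩
  | ifz_succ =>
    cases hcr with
    | slot hs => exact hbstep _ _ hs
    | ifz hg hN hP =>
      rcases CR.numL_or hbstep hg with rfl | ⟨t, ht⟩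
      · exact ⟨_, Step.ifz_succ⟩
      · exact ⟨_, Step.ifz_ctx ht⟩
  | lett_beta hV hW =>
    cases hcr with
    | slot hs => exact hbstep _ _ hs
    | lett _ _ hp hm =>
      cases hp with
      | slot hs2 =>
        obtain ⟨t, ht⟩ := hbstep _ _ hs2
        exact ⟨_, Step.lett_ctx ht⟩
      | pair h1 h2 =>
        rcases CR.valL_or hbstep h1 hV with v1 | ⟨t, ht⟩
        · rcases CR.valL_or hbstep h2 hW with v2 | ⟨t, ht⟩
          · exact ⟨_, Step.lett_beta v1 v2⟩
          · exact ⟨_, Step.lett_ctx (Step.pair_right v1 ht)⟩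
        · exact ⟨_, Step.lett_ctx (Step.pair_left ht)⟩
  | fix_step =>
    cases hcr with
    | slot hs => exact hbstep _ _ hs
    | fix _ hm => exact ⟨_, Step.fix_step⟩
  | pred_zero =>
    cases hcr with
    | slot hs => exact hbstep _ _ hs
    | pred hg =>
      rcases CR.numL_or hbstep hg with rfl | ⟨t, ht⟩
      · exact ⟨_, Step.pred_zero⟩
      · exact ⟨_, Step.pred_ctx ht⟩
  | pred_succ =>
    cases hcr with
    | slot hs => exact hbstep _ _ hs
    | pred hg =>
      rcases CR.numL_or hbstep hg with rfl | ⟨t, ht⟩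
      · exact ⟨_, Step.pred_succ⟩
      · exact ⟨_, Step.pred_ctx ht⟩
  | beta hV =>
    cases hcr with
    | slot hs => exact hbstep _ _ hs
    | app hf hv =>
      cases hf with
      | slot hs2 =>
        obtain ⟨t, ht⟩ := hbstep _ _ hs2
        exact ⟨_, Step.app_left ht⟩
      | abs _ hm =>
        rcases CR.valL_or hbstep hv hV with v1 | ⟨t, ht⟩
        · exact ⟨_, Step.beta v1⟩
        · exact ⟨_, Step.app_right ht⟩
  | succ_ctx h ih =>
    cases hcr with
    | slot hs => exact hbstep _ _ hs
    | succ hm =>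
      obtain ⟨t, ht⟩ := ih hm
      exact ⟨_, Step.succ_ctx ht⟩
  | pred_ctx h ih =>
    cases hcr with
    | slot hs => exact hbstep _ _ hs
    | pred hm =>
      obtain ⟨t, ht⟩ := ih hm
      exact ⟨_, Step.pred_ctx ht⟩
  | pair_left h ih =>
    cases hcr with
    | slot hs => exact hbstep _ _ hs
    | pair hm hn =>
      obtain ⟨t, ht⟩ := ih hm
      exact ⟨_, Step.pair_left ht⟩
  | pair_right hV h ih =>
    cases hcr with
    | slot hs => exact hbstep _ _ hs
    | pair h1 h2 =>
      rcases CR.valL_or hbstep h1 hV with v1 | ⟨t, ht⟩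
      · obtain ⟨t, ht⟩ := ih h2
        exact ⟨_, Step.pair_right v1 ht⟩
      · exact ⟨_, Step.pair_left ht⟩
  | lett_ctx h ih =>
    cases hcr with
    | slot hs => exact hbstep _ _ hs
    | lett _ _ hm hn =>
      obtain ⟨t, ht⟩ := ih hm
      exact ⟨_, Step.lett_ctx ht⟩
  | ifz_ctx h ih =>
    cases hcr with
    | slot hs => exact hbstep _ _ hs
    | ifz hm hN hP =>
      obtain ⟨t, ht⟩ := ih hm
      exact ⟨_, Step.ifz_ctx ht⟩
  | app_right h ih =>
    cases hcr with
    | slot hs => exact hbstep _ _ hs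
    | app hf hv =>
      cases hf with
      | slot hs2 =>
        obtain ⟨t, ht⟩ := hbstep _ _ hs2
        exact ⟨_, Step.app_left ht⟩
      | abs _ hm =>
        obtain ⟨t, ht⟩ := ih hv
        exact ⟨_, Step.app_right ht⟩
  | app_left h ih =>
    cases hcr with
    | slot hs => exact hbstep _ _ hs
    | app hf hv =>
      obtain ⟨t, ht⟩ := ih hf
      exact ⟨_, Step.app_left ht⟩

theorem CR.nfR (hnf : ∀ a b, S a b → NormalForm a → a = b)
    {a b : Tm} (hcr : CR S a b) (hn : NormalForm a) : NormalForm b :=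
  fun ⟨t, ht⟩ => hn (CR.stepL_of_stepR hnf hcr ht)

theorem CR.nfL (hbstep : ∀ a b, S a b → ∃ t, Step b t)
    {a b : Tm} (hcr : CR S a b) (hn : NormalForm b) : NormalForm a :=
  fun ⟨s, hs⟩ => hn (CR.stepR_of_stepL hbstep hcr hs)

/-! #### FSem rigidity -/

theorem CR.fsem_rigid (hval : ∀ a b, S a b → IsValue a → a = b) :
    ∀ {F : FTy} {W W' : Tm}, FSem F W → CR S W W' → W' = W := by
  intro F
  induction F with
  | nat =>
    rintro W W' ⟨n, rfl⟩ hcr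
    exact CR.numL hval hcr
  | prod F1 F2 ih1 ih2 =>
    rintro W W' ⟨V, W0, rfl, h1, h2⟩ hcr
    cases hcr with
    | slot hs =>
      exact (hval _ _ hs (IsValue.pair (FSem_isValue h1) (FSem_isValue h2))).symm
    | pair hc1 hc2 => rw [ih1 h1 hc1, ih2 h2 hc2]

/-! #### Sem helper lemmas -/

theorem sem_isValue : ∀ {A : Ty} {v : Tm}, Sem A v → IsValue v := by
  intro A
  induction A with
  | nat => rintro v ⟨n, rfl⟩; exact IsValue.num n
  | prod B C ihB ihC => rintro v ⟨V, W, rfl, hV, hW⟩; exact IsValue.pair (ihB hV) (ihC hW)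
  | arrow B C _ _ => rintro v ⟨y, P, rfl, _, _⟩; exact IsValue.abs y P
  | narrow B F _ => rintro v ⟨y, P, rfl, _, _⟩; exact IsValue.abs y P
  | ok => rintro v ⟨_, hv⟩; exact hv

theorem sem_closed : ∀ {A : Ty} {v : Tm}, Sem A v → ClosedTm v := by
  intro A
  induction A with
  | nat => rintro v ⟨n, rfl⟩; exact numeral_closed n
  | prod B C ihB ihC =>
    rintro v ⟨V, W, rfl, hV, hW⟩
    have h1 := ihB hV; have h2 := ihC hW
    simp_all [ClosedTm, fv]
  | arrow B C _ _ => rintro v ⟨y, P, rfl, hc, _⟩; exact hc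
  | narrow B F _ => rintro v ⟨y, P, rfl, hc, _⟩; exact hc
  | ok => rintro v ⟨hc, _⟩; exact hc

theorem closed_pair_parts {a b : Tm} (h : ClosedTm (.pair a b)) :
    ClosedTm a ∧ ClosedTm b := by
  rw [ClosedTm, fv, Finset.union_eq_empty] at h
  exact h

theorem closed_abs_fv {y : ℕ} {P : Tm} (h : ClosedTm (.abs y P)) : fv P ⊆ {y} := by
  rw [ClosedTm, fv, Finset.sdiff_eq_empty_iff_subset] at h
  exact h

theorem closed_abs_subst {y : ℕ} {P V : Tm} (h : ClosedTm (.abs y P)) (hV : ClosedTm V) :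
    ClosedTm (subst y V P) :=
  closed_subst (closed_abs_fv h) hV

/-! #### The "slot evaluates to a unique value" relation -/

def SU (P0 V' : Tm) : Tm → Tm → Prop := fun a b => Steps P0 a ∧ b = V'

theorem transferU {P0 V' : Tm} (hP0c : ClosedTm P0) (hV'c : ClosedTm V')
    (huniq : ∀ Y, Steps P0 Y → NormalForm Y → Y = V') :
    ∀ (A : Ty) (a b : Tm), CR (SU P0 V') a b → NormalForm a → ClosedTm a →
      Sem A b → Sem A a := by
  have hnfS : ∀ a b, SU P0 V' a b → NormalForm a → a = b := by
    rintro a b ⟨hst, rfl⟩ hn; exact huniq a hst hn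
  have hvalS : ∀ a b, SU P0 V' a b → IsValue a → a = b :=
    fun a b hs hv => hnfS a b hs hv.normal
  have hstepS : ∀ a b a', SU P0 V' a b → Step a a' → SU P0 V' a' b := by
    rintro a b a' ⟨hst, rfl⟩ hstep; exact ⟨hst.tail hstep, rfl⟩
  have hclS : ∀ a b, SU P0 V' a b → ClosedTm a ∧ ClosedTm b := by
    rintro a b ⟨hst, rfl⟩; exact ⟨steps_closed hst hP0c, hV'c⟩
  intro A
  induction A with
  | nat =>
    intro a b hcr hn _ hb
    obtain ⟨n, rfl⟩ := hb
    exact ⟨n, CR.numR_nfa hnfS hcr hn⟩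
  | prod B C ihB ihC =>
    intro a b hcr hn hc hb
    obtain ⟨V, W, rfl, hV, hW⟩ := hb
    cases hcr with
    | slot hs => rw [hnfS _ _ hs hn]; exact ⟨V, W, rfl, hV, hW⟩
    | pair h1 h2 =>
      have hn1 := nf_pair_left hn
      have hv1 : IsValue _ := CR.valR_nf hnfS h1 hn1 (sem_isValue hV)
      have hn2 := nf_pair_right hn hv1
      have hcparts := closed_pair_parts hc
      exact ⟨_, _, rfl, ihB _ _ h1 hn1 hcparts.1 hV, ihC _ _ h2 hn2 hcparts.2 hW⟩
  | arrow B C ihB ihC =>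
    intro a b hcr hn hc hb
    obtain ⟨y, P', heq, hbc, hbody⟩ := hb
    subst heq
    cases hcr with
    | slot hs => rw [hnfS _ _ hs hn]; exact ⟨y, P', rfl, hbc, hbody⟩
    | @abs _ P _ hP =>
      refine ⟨y, P, rfl, hc, ?_⟩
      intro V hVc hVv hVB
      by_cases hdiv : Diverges (subst y V P)
      · exact Or.inr ⟨closed_abs_subst hc hVc, hdiv⟩
      · left
        obtain ⟨W, hWsteps, hWnf⟩ := not_not.mp hdiv
        have hcrbody := CR.substc hclS hP (CR.refl _ V) y
        obtain ⟨W', hW'steps, hcrW⟩ := CR.simLs hvalS hstepS hclS hcrbody hWsteps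
        have hW'nf : NormalForm W' := CR.nfR hnfS hcrW hWnf
        rcases hbody V hVc hVv hVB with ⟨hclb, Vc, hVcsteps, hVcval, hVcsem⟩ | ⟨_, hdiv'⟩
        · obtain rfl : Vc = W' := nf_unique hVcsteps hW'steps hVcval.normal hW'nf
          have hWc : ClosedTm W := steps_closed hWsteps (closed_abs_subst hc hVc)
          have hsemW := ihC _ _ hcrW hWnf hWc hVcsem
          exact ⟨closed_abs_subst hc hVc, W, hWsteps, sem_isValue hsemW, hsemW⟩
        · exact absurd hdiv' (fun hd => hd ⟨W', hW'steps, hW'nf⟩)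
  | narrow B F ihB =>
    intro a b hcr hn hc hb
    obtain ⟨y, P', heq, hbc, hbody⟩ := hb
    subst heq
    cases hcr with
    | slot hs => rw [hnfS _ _ hs hn]; exact ⟨y, P', rfl, hbc, hbody⟩
    | @abs _ P _ hP =>
      refine ⟨y, P, rfl, hc, ?_⟩
      intro V hVc hVv hTS
      obtain ⟨hclb, W, hWsteps, hWval, hWF⟩ := hTS
      have hcrbody := CR.substc hclS hP (CR.refl _ V) y
      obtain ⟨W', hW'steps, hcrW⟩ := CR.simLs hvalS hstepS hclS hcrbody hWsteps
      have hWW : W' = W := CR.fsem_rigid hvalS hWF hcrW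
      exact hbody V hVc hVv ⟨closed_abs_subst hbc hVc, W, hWW ▸ hW'steps, hWval, hWF⟩
  | ok =>
    intro a b hcr hn hc hb
    exact ⟨hc, CR.valR_nf hnfS hcr hn hb.2⟩

/-! #### Inhabitation of every type -/

theorem abs_div_closed : ClosedTm (.abs 0 divTm) := by
  simp [ClosedTm, divTm, fv]

theorem sem_inhabited : ∀ A : Ty, ∃ V, ClosedTm V ∧ IsValue V ∧ Sem A V := by
  intro A
  induction A with
  | nat => exact ⟨numeral 0, numeral_closed 0, IsValue.num 0, 0, rfl⟩
  | prod B C ihB ihC =>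
    obtain ⟨V, hVc, hVv, hVs⟩ := ihB
    obtain ⟨W, hWc, hWv, hWs⟩ := ihC
    refine ⟨.pair V W, ?_, IsValue.pair hVv hWv, V, W, rfl, hVs, hWs⟩
    simp_all [ClosedTm, fv]
  | arrow B C _ _ =>
    refine ⟨.abs 0 divTm, abs_div_closed, IsValue.abs 0 divTm,
      0, divTm, rfl, abs_div_closed, ?_⟩
    intro V hVc _ _
    rw [subst_closed_id div_closed]
    exact Or.inr ⟨div_closed, div_diverges⟩
  | narrow B F _ =>
    refine ⟨.abs 0 divTm, abs_div_closed, IsValue.abs 0 divTm,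
      0, divTm, rfl, abs_div_closed, ?_⟩
    intro V hVc hVv hTS
    rw [subst_closed_id div_closed] at hTS
    obtain ⟨_, W, hWsteps, hWval, _⟩ := hTS
    rw [div_steps hWsteps] at hWval
    exact absurd hWval (not_isValue_fix 0 (.var 0))
  | ok => exact ⟨numeral 0, numeral_closed 0, IsValue.num 0, ⟨numeral_closed 0, IsValue.num 0⟩⟩

/-! #### Approximants are in `T̄⟦A⟧` -/

theorem fixApprox_closed {x : ℕ} {M : Tm} (hM : fv M ⊆ {x}) :
    ∀ n, ClosedTm (fixApprox x M n) := by
  intro n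
  induction n with
  | zero => exact div_closed
  | succ n ih => exact closed_subst hM ih

theorem approx_TBar {x : ℕ} {M : Tm} {A : Ty} (hM : fv M ⊆ {x})
    (h : ∀ V, ClosedTm V → IsValue V → Sem A V → TBarSem (Sem A) (subst x V M)) :
    ∀ n, TBarSem (Sem A) (fixApprox x M n) := by
  have key : ∀ (P0 : Tm), ClosedTm P0 →
      (∃ V', ClosedTm V' ∧ IsValue V' ∧ Sem A V' ∧
        (∀ Y, Steps P0 Y → NormalForm Y → Y = V')) →
      TBarSem (Sem A) (subst x P0 M) := by
    rintro P0 hP0c ⟨V', hV'c, hV'v, hV's, huniq⟩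
    have hnfS : ∀ a b, SU P0 V' a b → NormalForm a → a = b := by
      rintro a b ⟨hst, rfl⟩ hn; exact huniq a hst hn
    have hvalS : ∀ a b, SU P0 V' a b → IsValue a → a = b :=
      fun a b hs hv => hnfS a b hs hv.normal
    have hstepS : ∀ a b a', SU P0 V' a b → Step a a' → SU P0 V' a' b := by
      rintro a b a' ⟨hst, rfl⟩ hstep; exact ⟨hst.tail hstep, rfl⟩
    have hclS : ∀ a b, SU P0 V' a b → ClosedTm a ∧ ClosedTm b := by
      rintro a b ⟨hst, rfl⟩; exact ⟨steps_closed hst hP0c, hV'c⟩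
    have hcr : CR (SU P0 V') (subst x P0 M) (subst x V' M) :=
      CR.substc hclS (CR.refl _ M) (CR.slot ⟨Relation.ReflTransGen.refl, rfl⟩) x
    by_cases hdiv : Diverges (subst x P0 M)
    · exact Or.inr ⟨closed_subst hM hP0c, hdiv⟩
    · left
      obtain ⟨U, hU, hUnf⟩ := not_not.mp hdiv
      obtain ⟨U', hU', hcrU⟩ := CR.simLs hvalS hstepS hclS hcr hU
      have hU'nf : NormalForm U' := CR.nfR hnfS hcrU hUnf
      rcases h V' hV'c hV'v hV's with ⟨hclb, Vc, hVcsteps, hVcval, hVcsem⟩ | ⟨_, hdiv'⟩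
      · obtain rfl : Vc = U' := nf_unique hVcsteps hU' hVcval.normal hU'nf
        have hUc : ClosedTm U := steps_closed hU (closed_subst hM hP0c)
        have hsemU := transferU hP0c hV'c huniq A U _ hcrU hUnf hUc hVcsem
        exact ⟨closed_subst hM hP0c, U, hU, sem_isValue hsemU, hsemU⟩
      · exact absurd hdiv' (fun hd => hd ⟨U', hU', hU'nf⟩)
  intro n
  induction n with
  | zero => exact Or.inr ⟨div_closed, div_diverges⟩
  | succ n ih =>
    show TBarSem (Sem A) (subst x (fixApprox x M n) M)
    rcases ih with ⟨hP0c, Vn, hVnsteps, hVnval, hVnsem⟩ | ⟨hP0c, hdivP0⟩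
    · exact key _ hP0c ⟨Vn, steps_closed hVnsteps hP0c, hVnval, hVnsem,
        fun Y hY hYn => nf_unique hY hVnsteps hYn hVnval.normal⟩
    · obtain ⟨V0, hV0c, hV0v, hV0s⟩ := sem_inhabited A
      exact key _ hP0c ⟨V0, hV0c, hV0v, hV0s,
        fun Y hY hYn => absurd ⟨Y, hY, hYn⟩ hdivP0⟩

/-! #### More generic CR lemmas needed on the K side -/

theorem CR.valR_fixslot (hfix : ∀ a b, S a b → ∃ y m, b = Tm.fix y m) :
    ∀ {v v' : Tm}, CR S v v' → IsValue v' → IsValue v := by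
  intro v v' hcr hv
  induction hv generalizing v with
  | var y =>
    cases hcr with
    | slot hs => obtain ⟨y', m', hy⟩ := hfix _ _ hs; cases hy
    | var => exact IsValue.var y
  | num n =>
    rw [CR.numR_fix hfix hcr]; exact IsValue.num n
  | pair hV hW ihV ihW =>
    cases hcr with
    | slot hs => obtain ⟨y', m', hy⟩ := hfix _ _ hs; cases hy
    | pair h1 h2 => exact IsValue.pair (ihV h1) (ihW h2)
  | abs y m =>
    cases hcr with
    | slot hs => obtain ⟨y', m', hy⟩ := hfix _ _ hs; cases hy
    | abs _ _ => exact IsValue.abs _ _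

theorem CR.fsem_rigidR (hfix : ∀ a b, S a b → ∃ y m, b = Tm.fix y m) :
    ∀ {F : FTy} {a b : Tm}, FSem F b → CR S a b → a = b := by
  intro F
  induction F with
  | nat =>
    rintro a b ⟨n, rfl⟩ hcr
    exact CR.numR_fix hfix hcr
  | prod F1 F2 ih1 ih2 =>
    rintro a b ⟨V, W0, rfl, h1, h2⟩ hcr
    cases hcr with
    | slot hs => obtain ⟨y', m', hy⟩ := hfix _ _ hs; cases hy
    | pair hc1 hc2 => rw [ih1 h1 hc1, ih2 h2 hc2]

/-! #### The approximant/fixpoint relation with unfolding budget -/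

def SK (x : ℕ) (M : Tm) (k : ℕ) : Tm → Tm → Prop :=
  fun a b => (∃ m, k ≤ m ∧ a = fixApprox x M m) ∧ b = Tm.fix x M

theorem fix_closed_of {x : ℕ} {M : Tm} (hM : fv M ⊆ {x}) : ClosedTm (.fix x M) := by
  rw [ClosedTm]
  show fv M \ {x} = ∅
  rw [Finset.sdiff_eq_empty_iff_subset]
  exact hM

theorem SK_mono {x : ℕ} {M : Tm} {k k' : ℕ} (hkk : k' ≤ k) :
    ∀ a b, SK x M k a b → SK x M k' a b := by
  rintro a b ⟨⟨m, hm, ha⟩, hb⟩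
  exact ⟨⟨m, le_trans hkk hm, ha⟩, hb⟩

theorem SK_fix {x : ℕ} {M : Tm} {k : ℕ} :
    ∀ a b, SK x M k a b → ∃ y m, b = Tm.fix y m := by
  rintro a b ⟨_, rfl⟩; exact ⟨x, M, rfl⟩

theorem SK_cl {x : ℕ} {M : Tm} (hM : fv M ⊆ {x}) {k : ℕ} :
    ∀ a b, SK x M k a b → ClosedTm a ∧ ClosedTm b := by
  rintro a b ⟨⟨m, hm, rfl⟩, rfl⟩
  exact ⟨fixApprox_closed hM m, fix_closed_of hM⟩

theorem SK_bstep {x : ℕ} {M : Tm} {k : ℕ} :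
    ∀ a b, SK x M k a b → ∃ t, Step b t := by
  rintro a b ⟨_, rfl⟩; exact ⟨_, Step.fix_step⟩

theorem SK_nfb {x : ℕ} {M : Tm} {k : ℕ} :
    ∀ a b, SK x M k a b → NormalForm b → False := by
  rintro a b ⟨_, rfl⟩ hn; exact nf_fix_false hn

theorem simK {x : ℕ} {M : Tm} (hM : fv M ⊆ {x}) :
    ∀ {k : ℕ} {a b b' : Tm}, CR (SK x M (k+1)) a b → Step b b' →
      ∃ a', Steps a a' ∧ CR (SK x M k) a' b' := by
  intro k a b b' hcr hstep
  have mono1 : ∀ {a b : Tm}, CR (SK x M (k+1)) a b → CR (SK x M k) a b :=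
    fun h => CR.mono (SK_mono (Nat.le_succ k)) h
  induction hstep generalizing a with
  | ifz_zero =>
    cases hcr with
    | slot hs => exact absurd hs.2 (by simp)
    | ifz hg hN hP =>
      obtain rfl := CR.numR_fix SK_fix hg
      exact ⟨_, Relation.ReflTransGen.single Step.ifz_zero, mono1 hN⟩
  | ifz_succ =>
    cases hcr with
    | slot hs => exact absurd hs.2 (by simp)
    | ifz hg hN hP =>
      obtain rfl := CR.numR_fix SK_fix hg
      exact ⟨_, Relation.ReflTransGen.single Step.ifz_succ, mono1 hP⟩
  | lett_beta hV hW =>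
    cases hcr with
    | slot hs => exact absurd hs.2 (by simp)
    | lett _ _ hp hm =>
      cases hp with
      | slot hs2 => exact absurd hs2.2 (by simp)
      | pair h1 h2 =>
        exact ⟨_, Relation.ReflTransGen.single
            (Step.lett_beta (CR.valR_fixslot SK_fix h1 hV) (CR.valR_fixslot SK_fix h2 hW)),
          CR.substc (SK_cl hM) (CR.substc (SK_cl hM) (mono1 hm) (mono1 h1) _) (mono1 h2) _⟩
  | fix_step =>
    rename_i xx MM
    cases hcr with
    | slot hs =>
      obtain ⟨⟨m, hkm, rfl⟩, hfixeq⟩ := hs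
      injection hfixeq with hy hB
      subst hy; subst hB
      obtain ⟨m', rfl⟩ : ∃ m', m = m' + 1 := ⟨m - 1, by omega⟩
      refine ⟨fixApprox xx MM (m'+1), Relation.ReflTransGen.refl, ?_⟩
      have hslot : SK xx MM k (fixApprox xx MM m') (Tm.fix xx MM) :=
        ⟨⟨m', by omega, rfl⟩, rfl⟩
      show CR (SK xx MM k) (subst xx (fixApprox xx MM m') MM) (subst xx (.fix xx MM) MM)
      exact CR.substc (SK_cl hM) (CR.refl _ MM) (CR.slot hslot) xx
    | @fix _ aB _ hB =>
      exact ⟨_, Relation.ReflTransGen.single Step.fix_step,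
        CR.substc (SK_cl hM) (mono1 hB) (CR.fix _ (mono1 hB)) _⟩
  | pred_zero =>
    cases hcr with
    | slot hs => exact absurd hs.2 (by simp)
    | pred hg =>
      obtain rfl := CR.numR_fix SK_fix hg
      exact ⟨_, Relation.ReflTransGen.single Step.pred_zero, CR.refl _ _⟩
  | pred_succ =>
    cases hcr with
    | slot hs => exact absurd hs.2 (by simp)
    | pred hg =>
      obtain rfl := CR.numR_fix SK_fix hg
      exact ⟨_, Relation.ReflTransGen.single Step.pred_succ, CR.refl _ _⟩
  | beta hV =>
    cases hcr with
    | slot hs => exact absurd hs.2 (by simp)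
    | app hf hv =>
      cases hf with
      | slot hs2 => exact absurd hs2.2 (by simp)
      | abs _ hm =>
        exact ⟨_, Relation.ReflTransGen.single (Step.beta (CR.valR_fixslot SK_fix hv hV)),
          CR.substc (SK_cl hM) (mono1 hm) (mono1 hv) _⟩
  | succ_ctx h ih =>
    cases hcr with
    | slot hs => exact absurd hs.2 (by simp)
    | succ hm =>
      obtain ⟨a2, hsteps, hc⟩ := ih hm
      exact ⟨_, steps_succ hsteps, CR.succ hc⟩
  | pred_ctx h ih =>
    cases hcr with
    | slot hs => exact absurd hs.2 (by simp)
    | pred hm =>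
      obtain ⟨a2, hsteps, hc⟩ := ih hm
      exact ⟨_, steps_pred hsteps, CR.pred hc⟩
  | pair_left h ih =>
    cases hcr with
    | slot hs => exact absurd hs.2 (by simp)
    | pair hm hn =>
      obtain ⟨a2, hsteps, hc⟩ := ih hm
      exact ⟨_, steps_pair_left hsteps, CR.pair hc (mono1 hn)⟩
  | pair_right hV h ih =>
    cases hcr with
    | slot hs => exact absurd hs.2 (by simp)
    | pair h1 h2 =>
      obtain ⟨a2, hsteps, hc⟩ := ih h2
      exact ⟨_, steps_pair_right (CR.valR_fixslot SK_fix h1 hV) hsteps,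
        CR.pair (mono1 h1) hc⟩
  | lett_ctx h ih =>
    cases hcr with
    | slot hs => exact absurd hs.2 (by simp)
    | lett _ _ hm hn =>
      obtain ⟨a2, hsteps, hc⟩ := ih hm
      exact ⟨_, steps_lett hsteps, CR.lett _ _ hc (mono1 hn)⟩
  | ifz_ctx h ih =>
    cases hcr with
    | slot hs => exact absurd hs.2 (by simp)
    | ifz hm hN hP =>
      obtain ⟨a2, hsteps, hc⟩ := ih hm
      exact ⟨_, steps_ifz hsteps, CR.ifz hc (mono1 hN) (mono1 hP)⟩
  | app_right h ih =>
    cases hcr with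
    | slot hs => exact absurd hs.2 (by simp)
    | app hf hv =>
      cases hf with
      | slot hs2 => exact absurd hs2.2 (by simp)
      | @abs _ aB _ hB =>
        obtain ⟨a2, hsteps, hc⟩ := ih hv
        exact ⟨_, steps_app_right hsteps, CR.app (CR.abs _ (mono1 hB)) hc⟩
  | app_left h ih =>
    cases hcr with
    | slot hs => exact absurd hs.2 (by simp)
    | app hf hv =>
      obtain ⟨a2, hsteps, hc⟩ := ih hf
      exact ⟨_, steps_app_left hsteps, CR.app hc (mono1 hv)⟩

theorem simKn {x : ℕ} {M : Tm} (hM : fv M ⊆ {x}) :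
    ∀ {k j : ℕ} {a b b' : Tm}, CR (SK x M (j+k)) a b → StepN k b b' →
      ∃ a', Steps a a' ∧ CR (SK x M j) a' b' := by
  intro k
  induction k with
  | zero =>
    intro j a b b' hcr hstep
    cases hstep
    exact ⟨a, Relation.ReflTransGen.refl, hcr⟩
  | succ k ih =>
    intro j a b b' hcr hstep
    cases hstep with
    | head hbc hcb' =>
      have hcr' : CR (SK x M ((j+k)+1)) a b := by
        have : j + (k+1) = (j+k)+1 := by omega
        rw [this] at hcr
        exact hcr
      obtain ⟨a1, hsteps1, hcr1⟩ := simK hM hcr' hbc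
      obtain ⟨a2, hsteps2, hcr2⟩ := ih hcr1 hcb'
      exact ⟨a2, hsteps1.trans hsteps2, hcr2⟩

/-! #### Transfer along the approximant relation -/

theorem transferK {x : ℕ} {M : Tm} (hM : fv M ⊆ {x}) :
    ∀ (A : Ty) (U : Tm), NormalForm U → ClosedTm U →
      (∀ K, ∃ W, CR (SK x M K) W U ∧ ClosedTm W ∧ Sem A W) →
      Sem A U := by
  intro A
  induction A with
  | nat =>
    intro U hn hc hex
    obtain ⟨W, hcr, hWc, hWs⟩ := hex 0
    obtain ⟨n, rfl⟩ := hWs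
    exact ⟨n, CR.numL_nfb SK_nfb hcr hn⟩
  | prod B C ihB ihC =>
    intro U hn hc hex
    obtain ⟨W0, hcr0, hW0c, hW0s⟩ := hex 0
    obtain ⟨V0, W0', rfl, _, _⟩ := hW0s
    cases hcr0 with
    | slot hs => rw [hs.2] at hn; exact (nf_fix_false hn).elim
    | @pair _ U1 _ U2 h01 h02 =>
      have hex1 : ∀ K, ∃ W, CR (SK x M K) W U1 ∧ ClosedTm W ∧ Sem B W := by
        intro K
        obtain ⟨W, hcr, hWc, hWs⟩ := hex K
        obtain ⟨V, W2, rfl, hV, hW2⟩ := hWs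
        cases hcr with
        | slot hs => rw [hs.2] at hn; exact (nf_fix_false hn).elim
        | pair h1 h2 => exact ⟨V, h1, (closed_pair_parts hWc).1, hV⟩
      have hex2 : ∀ K, ∃ W, CR (SK x M K) W U2 ∧ ClosedTm W ∧ Sem C W := by
        intro K
        obtain ⟨W, hcr, hWc, hWs⟩ := hex K
        obtain ⟨V, W2, rfl, hV, hW2⟩ := hWs
        cases hcr with
        | slot hs => rw [hs.2] at hn; exact (nf_fix_false hn).elim
        | pair h1 h2 => exact ⟨W2, h2, (closed_pair_parts hWc).2, hW2⟩
      have hn1 := nf_pair_left hn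
      have hcparts := closed_pair_parts hc
      have hsem1 := ihB U1 hn1 hcparts.1 hex1
      have hn2 := nf_pair_right hn (sem_isValue hsem1)
      have hsem2 := ihC U2 hn2 hcparts.2 hex2
      exact ⟨U1, U2, rfl, hsem1, hsem2⟩
  | arrow B C ihB ihC =>
    intro U hn hc hex
    obtain ⟨W0, hcr0, hW0c, hW0s⟩ := hex 0
    obtain ⟨y, P0, rfl, _, _⟩ := hW0s
    cases hcr0 with
    | slot hs => rw [hs.2] at hn; exact (nf_fix_false hn).elim
    | @abs _ _ P hP0 =>
      refine ⟨y, P, rfl, hc, ?_⟩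
      intro V hVc hVv hVB
      by_cases hdiv : Diverges (subst y V P)
      · exact Or.inr ⟨closed_abs_subst hc hVc, hdiv⟩
      · left
        obtain ⟨W, hWsteps, hWnf⟩ := not_not.mp hdiv
        obtain ⟨kk, hkk⟩ := steps_stepN hWsteps
        have hexC : ∀ j, ∃ Wj, CR (SK x M j) Wj W ∧ ClosedTm Wj ∧ Sem C Wj := by
          intro j
          obtain ⟨Wb, hcrb, hWbc, hWbs⟩ := hex (j + kk)
          obtain ⟨y', P', heq, hWbcl, hbody⟩ := hWbs
          subst heq
          cases hcrb with
          | slot hs => rw [hs.2] at hn; exact (nf_fix_false hn).elim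
          | @abs _ _ _ hPP =>
            have hbodyV := hbody V hVc hVv hVB
            have hcrbody : CR (SK x M (j+kk)) (subst y V P') (subst y V P) :=
              CR.substc (SK_cl hM) hPP (CR.refl _ V) y
            obtain ⟨W2, hW2steps, hcrW2⟩ := simKn hM hcrbody hkk
            have hW2nf : NormalForm W2 := CR.nfL SK_bstep hcrW2 hWnf
            rcases hbodyV with ⟨hclb2, Vc, hVcsteps, hVcval, hVcsem⟩ | ⟨_, hdiv2⟩
            · have hveq : Vc = W2 := nf_unique hVcsteps hW2steps hVcval.normal hW2nf
              exact ⟨W2, hcrW2, steps_closed hW2steps (closed_abs_subst hWbcl hVc),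
                hveq ▸ hVcsem⟩
            · exact absurd hdiv2 (fun hd => hd ⟨W2, hW2steps, hW2nf⟩)
        have hWc : ClosedTm W := steps_closed hWsteps (closed_abs_subst hc hVc)
        have hWsem := ihC W hWnf hWc hexC
        exact ⟨closed_abs_subst hc hVc, W, hWsteps, sem_isValue hWsem, hWsem⟩
  | narrow B F ihB =>
    intro U hn hc hex
    obtain ⟨W0, hcr0, hW0c, hW0s⟩ := hex 0
    obtain ⟨y, P0, rfl, _, _⟩ := hW0s
    cases hcr0 with
    | slot hs => rw [hs.2] at hn; exact (nf_fix_false hn).elim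
    | @abs _ _ P hP0 =>
      refine ⟨y, P, rfl, hc, ?_⟩
      intro V hVc hVv hTS
      obtain ⟨hclb, W, hWsteps, hWval, hWF⟩ := hTS
      obtain ⟨kk, hkk⟩ := steps_stepN hWsteps
      obtain ⟨Wb, hcrb, hWbc, hWbs⟩ := hex kk
      obtain ⟨y', P', heq, hWbcl, hbody⟩ := hWbs
      subst heq
      cases hcrb with
      | slot hs => rw [hs.2] at hn; exact (nf_fix_false hn).elim
      | @abs _ _ _ hPP =>
        have hcrbody : CR (SK x M kk) (subst y V P') (subst y V P) :=
          CR.substc (SK_cl hM) hPP (CR.refl _ V) y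
        have hcrbody' : CR (SK x M (0+kk)) (subst y V P') (subst y V P) := by
          rw [Nat.zero_add]; exact hcrbody
        obtain ⟨W2, hW2steps, hcrW2⟩ := simKn hM hcrbody' hkk
        have hWW : W2 = W := CR.fsem_rigidR SK_fix hWF hcrW2
        exact hbody V hVc hVv
          ⟨closed_abs_subst hWbcl hVc, W, hWW ▸ hW2steps, hWval, hWF⟩
  | ok =>
    intro U hn hc hex
    obtain ⟨W, hcr, hWc, hWs⟩ := hex 0
    exact ⟨hc, CR.valL_nfb SK_nfb hcr hn hWs.2⟩

end FixAux
/-- Typing is closed under fixpoints: if `λx.M` is a closed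
abstraction in `⟦A→A⟧`, then `fix x.M ∈ TBar⟦A⟧`. -/
theorem typing_closed_under_fixpoints (x : ℕ) (M : Tm) (A : Ty)
    (hcl : ClosedTm (.abs x M)) (h : Sem (.arrow A A) (.abs x M)) :
    TBarSem (Sem A) (.fix x M) := by
  have hM : fv M ⊆ {x} := closed_abs_fv hcl
  have hfixcl : ClosedTm (.fix x M) := fix_closed_of hM
  obtain ⟨x', P, heq, hc0, hbody⟩ := h
  rw [show x' = x from (Tm.abs.inj heq).1.symm,
      show P = M from (Tm.abs.inj heq).2.symm] at hbody
  by_cases hdiv : Diverges (.fix x M)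
  · exact Or.inr ⟨hfixcl, hdiv⟩
  · obtain ⟨R, hRsteps, hRnf⟩ := not_not.mp hdiv
    obtain ⟨L, hL⟩ := steps_stepN hRsteps
    have happrox := approx_TBar hM hbody
    have hex : ∀ K, ∃ W, CR (SK x M K) W R ∧ ClosedTm W ∧ Sem A W := by
      intro K
      have hcr0 : CR (SK x M (K+L)) (fixApprox x M (K+L)) (.fix x M) :=
        CR.slot ⟨⟨K+L, le_refl _, rfl⟩, rfl⟩
      obtain ⟨W, hWsteps, hcrW⟩ := simKn hM hcr0 hL
      have hWnf : NormalForm W := CR.nfL SK_bstep hcrW hRnf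
      rcases happrox (K+L) with ⟨hac, Vc, hVcsteps, hVcval, hVcsem⟩ | ⟨hac, hdivappr⟩
      · have hveq : Vc = W := nf_unique hVcsteps hWsteps hVcval.normal hWnf
        exact ⟨W, hcrW, steps_closed hWsteps (fixApprox_closed hM _), hveq ▸ hVcsem⟩
      · exact absurd hdivappr (fun hd => hd ⟨W, hWsteps, hWnf⟩)
    have hRc : ClosedTm R := steps_closed hRsteps hfixcl
    have hsem := transferK hM A R hRnf hRc hex
    exact Or.inl ⟨hfixcl, R, hRsteps, sem_isValue hsem, hsem⟩

end PCF
end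

section
/- Soundness of the algorithmic constrained type system relative to the declarative one: for every finite set Γ of typing and subtype formulas and every set Δ of at most one typing formula, if Typ(Γ) | Con(Γ) ⊢₂ Δ is derivable in the algorithmic system, then Γ ⊢ Δ is derivable in the declarative two-sided constrained type system. -/
namespace Constr

/-- A finite signature of ranked datatype constructors, including a binary
pair constructor. -/
structure Signature where
  C : Type
  fin : Fintype C
  deceq : DecidableEq C
  arity : C → ℕ
  pairC : C
  pair_arity : arity pairC = 2

instance (S : Signature) : Fintype S.C := S.fin
instance (S : Signature) : DecidableEq S.C := S.deceq

variable {S : Signature}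

/-- Terms of the constructor language.  Local variables and top-level
identifiers are natural numbers.  A match term carries the scrutinee, the
(finite) set `I` of constructors that head its alternatives, the pattern
variables of each alternative, and the bodies of the alternatives. -/
inductive Tm (S : Signature) : Type
  | var : ℕ → Tm S
  | top : ℕ → Tm S
  | cns : (c : S.C) → (Fin (S.arity c) → Tm S) → Tm S
  | app : Tm S → Tm S → Tm S
  | abs : ℕ → Tm S → Tm S
  | fix : ℕ → Tm S → Tm S
  | mtch : Tm S → Finset S.C → ((c : S.C) → Fin (S.arity c) → ℕ) → (S.C → Tm S) → Tm S

/-- Values: variables, abstractions and constructor terms whose arguments are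
all values. -/
inductive IsVal : Tm S → Prop
  | var (x : ℕ) : IsVal (.var x)
  | abs (x : ℕ) (M : Tm S) : IsVal (.abs x M)
  | cns {c : S.C} {args : Fin (S.arity c) → Tm S} :
      (∀ i, IsVal (args i)) → IsVal (.cns c args)

/-- Capture-permitting substitution `M[N/x]` (adequate for closed `N`). -/
def subst (x : ℕ) (N : Tm S) : Tm S → Tm S
  | .var y => if y = x then N else .var y
  | .top f => .top f
  | .cns c args => .cns c (fun i => subst x N (args i))
  | .app M P => .app (subst x N M) (subst x N P)
  | .abs y M => if y = x then .abs y M else .abs y (subst x N M)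
  | .fix y M => if y = x then .fix y M else .fix y (subst x N M)
  | .mtch M I pv bs =>
      .mtch (subst x N M) I pv
        (fun c => if ∃ i, pv c i = x then bs c else subst x N (bs c))

/-- The free (local) variable relation. -/
inductive FreeIn (x : ℕ) : Tm S → Prop
  | var : FreeIn x (.var x)
  | cns {c : S.C} {args : Fin (S.arity c) → Tm S} (i : Fin (S.arity c)) :
      FreeIn x (args i) → FreeIn x (.cns c args)
  | appL {M N} : FreeIn x M → FreeIn x (.app M N)
  | appR {M N} : FreeIn x N → FreeIn x (.app M N)
  | abs {y M} : x ≠ y → FreeIn x M → FreeIn x (.abs y M)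
  | fix {y M} : x ≠ y → FreeIn x M → FreeIn x (.fix y M)
  | mtchScrut {M I pv bs} : FreeIn x M → FreeIn x (.mtch M I pv bs)
  | mtchBody {M I pv bs} {c : S.C} : c ∈ I → (∀ i, pv c i ≠ x) →
      FreeIn x (bs c) → FreeIn x (.mtch M I pv bs)

/-- A term is closed if it has no free local variables (it may contain
top-level identifiers). -/
def ClosedTm (M : Tm S) : Prop := ∀ x, ¬ FreeIn x M

/-- Iterated substitution (used for simultaneous pattern matching; adequate
since pattern variables are pairwise distinct and matched values closed). -/
def substSim (ps : List (ℕ × Tm S)) (M : Tm S) : Tm S :=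
  ps.foldl (fun acc p => subst p.1 p.2 acc) M

/-- A module: a finite map from top-level identifiers to terms. -/
def Module (S : Signature) : Type := ℕ → Option (Tm S)

/-- One-step CBV reduction relative to a module. -/
inductive Step (mod : Module S) : Tm S → Tm S → Prop
  | top {f M} : mod f = some M → Step mod (.top f) M
  | beta {x M V} : IsVal V → Step mod (.app (.abs x M) V) (subst x V M)
  | fixStep {x M} : Step mod (.fix x M) (subst x (.fix x M) M)
  | mtchStep {c : S.C} {vs : Fin (S.arity c) → Tm S} {I pv bs} :
      c ∈ I → (∀ i, IsVal (vs i)) →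
      Step mod (.mtch (.cns c vs) I pv bs)
        (substSim (List.ofFn (fun i => (pv c i, vs i))) (bs c))
  | cnsCtx {c : S.C} {args : Fin (S.arity c) → Tm S} {i : Fin (S.arity c)} {M'} :
      (∀ j : Fin (S.arity c), (j : ℕ) < (i : ℕ) → IsVal (args j)) →
      Step mod (args i) M' →
      Step mod (.cns c args) (.cns c (Function.update args i M'))
  | appL {M M' N} : Step mod M M' → Step mod (.app M N) (.app M' N)
  | appR {x M N N'} : Step mod N N' →
      Step mod (.app (.abs x M) N) (.app (.abs x M) N')
  | mtchCtx {M M' I pv bs} : Step mod M M' →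
      Step mod (.mtch M I pv bs) (.mtch M' I pv bs)

/-- Many-step reduction. -/
def Steps (mod : Module S) : Tm S → Tm S → Prop := Relation.ReflTransGen (Step mod)

def NormalForm (mod : Module S) (M : Tm S) : Prop := ¬ ∃ N, Step mod M N

/-- Constrained monotypes.  A sum type carries the finite set `I` of its head
constructors together with the argument types of each summand. -/
inductive CTy (S : Signature) : Type
  | tvar : ℕ → CTy S
  | ok : CTy S
  | arrow : CTy S → CTy S → CTy S
  | narrow : CTy S → CTy S → CTy S
  | sum : Finset S.C → ((c : S.C) → Fin (S.arity c) → CTy S) → CTy S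

noncomputable instance : DecidableEq (CTy S) := Classical.decEq _
noncomputable instance : DecidableEq (Tm S) := Classical.decEq _

/-- Constrained subtyping `C ⊢ A ⊑ B`. -/
inductive Sub (Cs : Set (CTy S × CTy S)) : CTy S → CTy S → Prop
  | id {A B} : (A, B) ∈ Cs → Sub Cs A B
  | tr {A B C'} : Sub Cs A B → Sub Cs B C' → Sub Cs A C'
  | arr {A A' B B'} : Sub Cs A' A → Sub Cs B B' → Sub Cs (.arrow A B) (.arrow A' B')
  | nar {A A' B B'} : Sub Cs A A' → Sub Cs B' B → Sub Cs (.narrow A B) (.narrow A' B')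
  | ok {A} : Sub Cs A .ok
  | sum {I J : Finset S.C} {f g} : I ⊆ J → (∀ c ∈ I, ∀ i, Sub Cs (f c i) (g c i)) →
      Sub Cs (.sum I f) (.sum J g)

/-- A constrained type scheme `∀ ā. C ⇒ A`. -/
structure Scheme (S : Signature) where
  vars : Finset ℕ
  cons : Finset (CTy S × CTy S)
  ty : CTy S

noncomputable instance : DecidableEq (Scheme S) := Classical.decEq _

/-- Formulas appearing in contexts: typing formulas `M : A`, top-level
identifier typings `f : S`, and subtype formulas `A ⊑ B`. -/
inductive CFormula (S : Signature) : Type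
  | tm : Tm S → CTy S → CFormula S
  | idt : ℕ → Scheme S → CFormula S
  | sub : CTy S → CTy S → CFormula S

noncomputable instance : DecidableEq (CFormula S) := Classical.decEq _

/-- The subtype constraints contained in a context. -/
def conOf (Γ : Finset (CFormula S)) : Set (CTy S × CTy S) :=
  {p | CFormula.sub p.1 p.2 ∈ Γ}

/-- `Γ ⊢ A ⊑ B`: subtyping derivable from the subtype formulas of `Γ`. -/
def ctxSub (Γ : Finset (CFormula S)) (A B : CTy S) : Prop := Sub (conOf Γ) A B

/-- Substitution of types for type variables. -/
def tsubst (σ : ℕ → CTy S) : CTy S → CTy S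
  | .tvar a => σ a
  | .ok => .ok
  | .arrow A B => .arrow (tsubst σ A) (tsubst σ B)
  | .narrow A B => .narrow (tsubst σ A) (tsubst σ B)
  | .sum I g => .sum I (fun c i => tsubst σ (g c i))

/-- Free type variables. -/
inductive TFreeIn (a : ℕ) : CTy S → Prop
  | tvar : TFreeIn a (.tvar a)
  | arrL {A B} : TFreeIn a A → TFreeIn a (.arrow A B)
  | arrR {A B} : TFreeIn a B → TFreeIn a (.arrow A B)
  | narL {A B} : TFreeIn a A → TFreeIn a (.narrow A B)
  | narR {A B} : TFreeIn a B → TFreeIn a (.narrow A B)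
  | sum {I g} {c : S.C} (i) : c ∈ I → TFreeIn a (g c i) → TFreeIn a (.sum I g)

/-- The pair term `(M, N)`, built with the distinguished pair constructor. -/
def pairTm (M N : Tm S) : Tm S :=
  .cns S.pairC (fun i => if (i : ℕ) = 0 then M else N)

/-- The pair type `(A, B)`. -/
def pairTy (A B : CTy S) : CTy S :=
  .sum {S.pairC} (fun _ i => if (i : ℕ) = 0 then A else B)

/-- `x` does not occur in a formula (i.e., not free in its subject). -/
def FormFresh (x : ℕ) : CFormula S → Prop
  | .tm M _ => ¬ FreeIn x M
  | _ => True

def CtxFresh (x : ℕ) (Γ : Finset (CFormula S)) : Prop := ∀ φ ∈ Γ, FormFresh x φ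

def DFresh (x : ℕ) : Option (Tm S × CTy S) → Prop
  | none => True
  | some p => ¬ FreeIn x p.1

/-- The typing context `{x : B_x | x ∈ FV(p)}` induced by a pattern. -/
noncomputable def patCtx (c : S.C) (pv : Fin (S.arity c) → ℕ)
    (Bs : Fin (S.arity c) → CTy S) : Finset (CFormula S) :=
  Finset.image (fun i => CFormula.tm (.var (pv i)) (Bs i)) Finset.univ

/-- Derivations of the two-sided constrained type system.  The right-hand side
is a set of at most one typing formula, represented by an `Option`. -/
inductive CDer : Finset (CFormula S) → Option (Tm S × CTy S) → Type
  | varK (Γ : Finset (CFormula S)) (x : ℕ) :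
      CDer Γ (some (.var x, .ok))
  | gvar {Γ : Finset (CFormula S)} (f : ℕ) (Sc : Scheme S) (σ : ℕ → CTy S) :
      (∀ a, a ∉ Sc.vars → σ a = .tvar a) →
      (∀ p ∈ Sc.cons, ctxSub (insert (CFormula.idt f Sc) Γ) (tsubst σ p.1) (tsubst σ p.2)) →
      CDer (insert (CFormula.idt f Sc) Γ) (some (.top f, tsubst σ Sc.ty))
  | lvar (Γ : Finset (CFormula S)) (x : ℕ) (A : CTy S) :
      CDer (insert (CFormula.tm (.var x) A) Γ) (some (.var x, A))
  | subL {Γ Δ M A B} : ctxSub Γ A B → CDer (insert (CFormula.tm M B) Γ) Δ →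
      CDer (insert (CFormula.tm M A) Γ) Δ
  | subR {Γ M A B} : ctxSub Γ B A → CDer Γ (some (M, B)) → CDer Γ (some (M, A))
  | absR {Γ : Finset (CFormula S)} {x M A B} :
      CDer (insert (CFormula.tm (.var x) B) Γ) (some (M, A)) →
      CtxFresh x Γ → CDer Γ (some (.abs x M, .arrow B A))
  | abnR {Γ : Finset (CFormula S)} {x M A B} :
      CDer (insert (CFormula.tm M A) Γ) (some (.var x, B)) →
      CtxFresh x Γ → CDer Γ (some (.abs x M, .narrow B A))
  | appL {Γ Δ M N A B} : CDer Γ (some (M, .narrow B A)) →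
      CDer (insert (CFormula.tm N B) Γ) Δ →
      CDer (insert (CFormula.tm (.app M N) A) Γ) Δ
  | appR {Γ M N A B} : CDer Γ (some (M, .arrow B A)) → CDer Γ (some (N, B)) →
      CDer Γ (some (.app M N, A))
  | cnsL {Γ Δ} {c : S.C} {args : Fin (S.arity c) → Tm S} {J : Finset S.C}
      {g : (c : S.C) → Fin (S.arity c) → CTy S} (i : Fin (S.arity c)) :
      c ∈ J → CDer (insert (CFormula.tm (args i) (g c i)) Γ) Δ →
      CDer (insert (CFormula.tm (.cns c args) (.sum J g)) Γ) Δ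
  | cnsR {Γ} {c : S.C} {args : Fin (S.arity c) → Tm S}
      {g : (c : S.C) → Fin (S.arity c) → CTy S} :
      (∀ i, CDer Γ (some (args i, g c i))) →
      CDer Γ (some (.cns c args, .sum {c} g))
  | mchR {Γ M I pv bs A} {Bs : (c : S.C) → Fin (S.arity c) → CTy S} :
      CDer Γ (some (M, .sum I Bs)) →
      (∀ c ∈ I, CDer (Γ ∪ patCtx c (pv c) (Bs c)) (some (bs c, A))) →
      (∀ c ∈ I, ∀ i, CtxFresh (pv c i) Γ) →
      CDer Γ (some (.mtch M I pv bs, A))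
  | mchL {Γ Δ M I pv bs A} {Bs : (c : S.C) → Fin (S.arity c) → CTy S} :
      (∀ c ∈ I, ∀ i, CDer (insert (CFormula.tm (bs c) A) Γ) (some (.var (pv c i), Bs c i))) →
      (∀ c ∈ I, CDer (insert (CFormula.tm (pairTm M (bs c)) (pairTy (.sum {c} Bs) A)) Γ) Δ) →
      (∀ c ∈ I, ∀ i, CtxFresh (pv c i) Γ ∧ DFresh (pv c i) Δ) →
      CDer (insert (CFormula.tm (.mtch M I pv bs) A) Γ) Δ
  | fixR {Γ : Finset (CFormula S)} {x M A} :
      CDer (insert (CFormula.tm (.var x) A) Γ) (some (M, A)) →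
      CtxFresh x Γ → CDer Γ (some (.fix x M, A))
  | cnsK {Γ Δ} {c : S.C} {args : Fin (S.arity c) → Tm S} (i : Fin (S.arity c)) :
      CDer (insert (CFormula.tm (args i) .ok) Γ) Δ →
      CDer (insert (CFormula.tm (.cns c args) .ok) Γ) Δ
  | funK {Γ Δ M N A} : CDer (insert (CFormula.tm M (.narrow .ok A)) Γ) Δ →
      CDer (insert (CFormula.tm (.app M N) .ok) Γ) Δ
  | cnsDL {Γ Δ} {c : S.C} {args : Fin (S.arity c) → Tm S} {A : CTy S} :
      ((∃ B1 B2, A = .arrow B1 B2) ∨ (∃ B1 B2, A = .narrow B1 B2) ∨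
        (∃ I g, A = CTy.sum I g ∧ c ∉ I)) →
      CDer (insert (CFormula.tm (.cns c args) A) Γ) Δ
  | absDL {Γ : Finset (CFormula S)} {Δ} {x M} {I : Finset S.C} {g} :
      CDer (insert (CFormula.tm (.abs x M) (.sum I g)) Γ) Δ

/-- Syntactic consistency of a single constraint. -/
def SynCons (p : CTy S × CTy S) : Prop :=
  (∃ a, p.1 = CTy.tvar a) ∨ (∃ a, p.2 = CTy.tvar a) ∨
  (∃ A1 A2 B1 B2, p.1 = CTy.arrow A1 A2 ∧ p.2 = CTy.arrow B1 B2) ∨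
  (∃ A1 A2 B1 B2, p.1 = CTy.narrow A1 A2 ∧ p.2 = CTy.narrow B1 B2) ∨
  p.2 = CTy.ok ∨
  (∃ I : Finset S.C, ∃ f, ∃ J : Finset S.C, ∃ g, p.1 = CTy.sum I f ∧ p.2 = CTy.sum J g ∧ I ⊆ J)

/-- Closure of a constraint set. -/
def ClosedCons (Cs : Set (CTy S × CTy S)) : Prop :=
  (∀ A A' B, (A, A') ∈ Cs → (A', B) ∈ Cs → (A, B) ∈ Cs) ∧
  (∀ I : Finset S.C, ∀ f, ∀ J : Finset S.C, ∀ g, (CTy.sum I f, CTy.sum J g) ∈ Cs →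
      ∀ c, c ∈ I → c ∈ J → ∀ i, (f c i, g c i) ∈ Cs) ∧
  (∀ A B A' B', (CTy.arrow A B, CTy.arrow A' B') ∈ Cs → (A', A) ∈ Cs ∧ (B, B') ∈ Cs) ∧
  (∀ A B A' B', (CTy.narrow A B, CTy.narrow A' B') ∈ Cs → (A, A') ∈ Cs ∧ (B', B) ∈ Cs)

/-- A consistent constraint set: closed and all constraints syntactically
consistent. -/
def ConsistentCons (Cs : Set (CTy S × CTy S)) : Prop :=
  ClosedCons Cs ∧ ∀ p ∈ Cs, SynCons p

/-- A type environment: subjects of typing formulas are variables or top-level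
identifiers, with at most one type per subject. -/
def IsTypeEnv (Γ : Finset (CFormula S)) : Prop :=
  (∀ M A, CFormula.tm M A ∈ Γ → (∃ x, M = Tm.var x) ∨ (∃ f, M = Tm.top f)) ∧
  (∀ M A B, CFormula.tm M A ∈ Γ → CFormula.tm M B ∈ Γ → A = B) ∧
  (∀ f Sc Sc', CFormula.idt f Sc ∈ Γ → CFormula.idt f Sc' ∈ Γ → Sc = Sc')

/-- A top-level type environment: all subjects are top-level identifiers. -/
def IsTopEnv (Γ : Finset (CFormula S)) : Prop :=
  IsTypeEnv Γ ∧ ∀ M A, CFormula.tm M A ∈ Γ → ∃ f, M = Tm.top f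

/-- The environment is consistent: its subtype constraints are consistent. -/
def EnvConsistent (Γ : Finset (CFormula S)) : Prop := ConsistentCons (conOf Γ)

def IsSubjVar (x : ℕ) (Γ : Finset (CFormula S)) : Prop :=
  ∃ A, CFormula.tm (.var x) A ∈ Γ

def IsSubjId (f : ℕ) (Γ : Finset (CFormula S)) : Prop :=
  (∃ A, CFormula.tm (.top f) A ∈ Γ) ∨ (∃ Sc, CFormula.idt f Sc ∈ Γ)

/-- Two environments have disjoint subjects. -/
def DisjSubj (Γ Δ : Finset (CFormula S)) : Prop :=
  (∀ x, ¬ (IsSubjVar x Γ ∧ IsSubjVar x Δ)) ∧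
  (∀ f, ¬ (IsSubjId f Γ ∧ IsSubjId f Δ))

/-- `a` is free in the scheme `∀ ā. C ⇒ A` (ignoring the quantifier). -/
def schemeFV (a : ℕ) (Sc : Scheme S) : Prop :=
  (∃ p ∈ Sc.cons, TFreeIn a p.1 ∨ TFreeIn a p.2) ∨ TFreeIn a Sc.ty

/-- A set of constraints as subtype formulas. -/
noncomputable def consFormulas (Cs : Finset (CTy S × CTy S)) : Finset (CFormula S) :=
  Cs.image (fun p => CFormula.sub p.1 p.2)

/-- `⊢ 𝓜 : Γ`: every top-level function of the module is a subject of `Γ`, and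
every top-level typing `f : ∀ ā. C ⇒ A` in `Γ` (with `ā` the free type
variables of `C` and `A`) is justified by a derivation `Γ ∪ C ⊢ 𝓜(f) : A`. -/
def ModTyped (mod : Module S) (Γ : Finset (CFormula S)) : Prop :=
  (∀ f M, mod f = some M → IsSubjId f Γ) ∧
  (∀ f Sc, CFormula.idt f Sc ∈ Γ →
    (∀ a, a ∈ Sc.vars ↔ schemeFV a Sc) ∧
    ∃ M, mod f = some M ∧ Nonempty (CDer (Γ ∪ consFormulas Sc.cons) (some (M, Sc.ty))))


/-- The algorithmic constrained type system `Γ | C ⊢₂ Δ`. -/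
inductive ADer : Finset (CFormula S) → Set (CTy S × CTy S) → Option (Tm S × CTy S) → Prop
  | inst {Γ : Finset (CFormula S)} {C} {f : ℕ} {Sc : Scheme S} {A' : CTy S}
      (σ : ℕ → CTy S) :
      (∀ a, a ∉ Sc.vars → σ a = .tvar a) →
      (∀ p ∈ Sc.cons, Sub C (tsubst σ p.1) (tsubst σ p.2)) →
      Sub C (tsubst σ Sc.ty) A' →
      ADer (insert (CFormula.idt f Sc) Γ) C (some (.top f, A'))
  | var2 {Γ C x A B} : Sub C A B →
      ADer (insert (CFormula.tm (.var x) A) Γ) C (some (.var x, B))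
  | varK2 {Γ C} {x : ℕ} {A} : Sub C .ok A → ADer Γ C (some (.var x, A))
  | absR2 {Γ C x M A B1 B2} :
      ADer (insert (CFormula.tm (.var x) B1) Γ) C (some (M, B2)) →
      Sub C (.arrow B1 B2) A → CtxFresh x Γ → ADer Γ C (some (.abs x M, A))
  | abnR2 {Γ C x M A B1 B2} :
      ADer (insert (CFormula.tm M B1) Γ) C (some (.var x, B2)) →
      Sub C (.narrow B2 B1) A → CtxFresh x Γ → ADer Γ C (some (.abs x M, A))
  | appR2 {Γ C M N A B1 B2} : ADer Γ C (some (M, B1)) → ADer Γ C (some (N, B2)) →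
      Sub C B1 (.arrow B2 A) → ADer Γ C (some (.app M N, A))
  | appL2 {Γ C Δ M N A B1 B2} : ADer Γ C (some (M, B1)) →
      ADer (insert (CFormula.tm N B2) Γ) C Δ → Sub C B1 (.narrow B2 A) →
      ADer (insert (CFormula.tm (.app M N) A) Γ) C Δ
  | cnsL2 {Γ C Δ} {c : S.C} {args : Fin (S.arity c) → Tm S} {A : CTy S}
      {g : (d : S.C) → Fin (S.arity d) → CTy S} (i : Fin (S.arity c)) :
      ADer (insert (CFormula.tm (args i) (g c i)) Γ) C Δ →
      Sub C A (.sum Finset.univ g) →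
      ADer (insert (CFormula.tm (.cns c args) A) Γ) C Δ
  | cnsR2 {Γ C} {c : S.C} {args : Fin (S.arity c) → Tm S} {A : CTy S}
      {g : (d : S.C) → Fin (S.arity d) → CTy S} :
      (∀ i, ADer Γ C (some (args i, g c i))) → Sub C (.sum {c} g) A →
      ADer Γ C (some (.cns c args, A))
  | mchR2 {Γ C M I pv bs A B} {Bs : (c : S.C) → Fin (S.arity c) → CTy S}
      {As : S.C → CTy S} :
      ADer Γ C (some (M, B)) →
      (∀ c ∈ I, ADer (Γ ∪ patCtx c (pv c) (Bs c)) C (some (bs c, As c))) →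
      Sub C B (.sum I Bs) → (∀ c ∈ I, Sub C (As c) A) →
      (∀ c ∈ I, ∀ i, CtxFresh (pv c i) Γ) →
      ADer Γ C (some (.mtch M I pv bs, A))
  | mchL2 {Γ C Δ M I pv bs A} {A' : S.C → CTy S} {Ai : S.C → CTy S} {Bi : S.C → CTy S}
      {Ax : (c : S.C) → Fin (S.arity c) → CTy S}
      {Bx : (c : S.C) → Fin (S.arity c) → CTy S} :
      (∀ c ∈ I, ADer (insert (CFormula.tm (pairTm M (bs c)) (A' c)) Γ) C Δ) →
      (∀ c ∈ I, ∀ i, ADer (insert (CFormula.tm (bs c) (Ax c i)) Γ) C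
        (some (.var (pv c i), Bx c i))) →
      (∀ c ∈ I, Sub C A (Ai c)) →
      (∀ c ∈ I, Sub C (pairTy (Bi c) (Ai c)) (A' c)) →
      (∀ c ∈ I, ∀ i, Sub C A (Ax c i)) →
      (∀ c ∈ I, Sub C (.sum {c} Bx) (Bi c)) →
      (∀ c ∈ I, ∀ i, CtxFresh (pv c i) Γ ∧ DFresh (pv c i) Δ) →
      ADer (insert (CFormula.tm (.mtch M I pv bs) A) Γ) C Δ
  | fixR2 {Γ C x M A B} : ADer (insert (CFormula.tm (.var x) A) Γ) C (some (M, B)) →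
      Sub C B A → CtxFresh x Γ → ADer Γ C (some (.fix x M, A))
  | cnsK2 {Γ C Δ} {c : S.C} {args : Fin (S.arity c) → Tm S} {A B : CTy S}
      (i : Fin (S.arity c)) :
      ADer (insert (CFormula.tm (args i) B) Γ) C Δ → Sub C .ok B →
      ADer (insert (CFormula.tm (.cns c args) A) Γ) C Δ
  | funK2 {Γ C Δ M N A B} : ADer (insert (CFormula.tm M B) Γ) C Δ →
      Sub C (.narrow .ok A) B →
      ADer (insert (CFormula.tm (.app M N) A) Γ) C Δ
  | cnsDL21 {Γ C Δ} {c : S.C} {args : Fin (S.arity c) → Tm S} {A B1 B2 : CTy S} :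
      Sub C A (.arrow B1 B2) → ADer (insert (CFormula.tm (.cns c args) A) Γ) C Δ
  | cnsDL22 {Γ C Δ} {c : S.C} {args : Fin (S.arity c) → Tm S} {A B1 B2 : CTy S} :
      Sub C A (.narrow B1 B2) → ADer (insert (CFormula.tm (.cns c args) A) Γ) C Δ
  | cnsDL23 {Γ C Δ} {c : S.C} {args : Fin (S.arity c) → Tm S} {A : CTy S}
      {g : (d : S.C) → Fin (S.arity d) → CTy S} :
      Sub C A (.sum (Finset.univ.erase c) g) →
      ADer (insert (CFormula.tm (.cns c args) A) Γ) C Δ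
  | absDL2 {Γ C Δ} {x : ℕ} {M : Tm S} {A : CTy S}
      {g : (d : S.C) → Fin (S.arity d) → CTy S} :
      Sub C A (.sum Finset.univ g) →
      ADer (insert (CFormula.tm (.abs x M) A) Γ) C Δ

/-- Is a formula a typing formula (as opposed to a subtype formula)? -/
def isTypForm : CFormula S → Bool
  | .sub _ _ => false
  | _ => true

/-- `Typ(Γ)`: the typing formulas of `Γ`. -/
def typOf (Γ : Finset (CFormula S)) : Finset (CFormula S) :=
  Γ.filter (fun φ => isTypForm φ)

theorem Sub.mono {Cs Cs' : Set (CTy S × CTy S)} (h : Cs ⊆ Cs') :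
    ∀ {A B : CTy S}, Sub Cs A B → Sub Cs' A B := by
  intro A B hs
  induction hs with
  | id h' => exact .id (h h')
  | tr _ _ ih1 ih2 => exact .tr ih1 ih2
  | arr _ _ ih1 ih2 => exact .arr ih1 ih2
  | nar _ _ ih1 ih2 => exact .nar ih1 ih2
  | ok => exact .ok
  | sum hIJ _ ih => exact .sum hIJ ih

theorem isTypForm_ne_sub {φ : CFormula S} (hφ : isTypForm φ = true) (A B : CTy S) :
    CFormula.sub A B ≠ φ := by
  intro e; rw [← e] at hφ; simp [isTypForm] at hφ

theorem conOf_mono {Γ Γ' : Finset (CFormula S)} (h : Γ ⊆ Γ') : conOf Γ ⊆ conOf Γ' :=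
  fun _ hp => h hp

theorem conOf_insert_typ {φ : CFormula S} (hφ : isTypForm φ = true)
    (Γ : Finset (CFormula S)) : conOf (insert φ Γ) = conOf Γ := by
  ext p
  simp only [conOf, Set.mem_setOf_eq, Finset.mem_insert]
  constructor
  · rintro (h | h)
    · exact absurd h (isTypForm_ne_sub hφ _ _)
    · exact h
  · exact Or.inr

theorem typOf_insert {φ : CFormula S} (hφ : isTypForm φ = true)
    (Γ : Finset (CFormula S)) : typOf (insert φ Γ) = insert φ (typOf Γ) := by
  simp [typOf, Finset.filter_insert, hφ]

theorem typOf_union (Γ Γ' : Finset (CFormula S)) :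
    typOf (Γ ∪ Γ') = typOf Γ ∪ typOf Γ' := Finset.filter_union _ _ _

theorem typOf_erase (Γ : Finset (CFormula S)) (φ : CFormula S) :
    typOf (Γ.erase φ) = (typOf Γ).erase φ := by
  ext ψ
  simp only [typOf, Finset.mem_filter, Finset.mem_erase]
  tauto

theorem typOf_patCtx (c : S.C) (pv : Fin (S.arity c) → ℕ)
    (Bs : Fin (S.arity c) → CTy S) : typOf (patCtx c pv Bs) = patCtx c pv Bs := by
  apply Finset.filter_true_of_mem
  intro φ hφ
  simp only [patCtx, Finset.mem_image] at hφ
  obtain ⟨i, _, rfl⟩ := hφ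
  rfl

theorem fresh_of_typ {x : ℕ} {Γ : Finset (CFormula S)} (h : CtxFresh x (typOf Γ)) :
    CtxFresh x Γ := by
  intro φ hφ
  cases φ with
  | tm M A => exact h _ (Finset.mem_filter.mpr ⟨hφ, rfl⟩)
  | idt f Sc => trivial
  | sub A B => trivial

theorem ctx_split {Γ Γ₀ : Finset (CFormula S)} {φ : CFormula S}
    (hφ : isTypForm φ = true) (h : typOf Γ = insert φ Γ₀) :
    ∃ Γ', typOf Γ' = Γ₀ ∧ conOf Γ' = conOf Γ ∧ insert φ Γ' = Γ := by
  have hφΓ : φ ∈ Γ := by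
    have h2 : φ ∈ typOf Γ := by rw [h]; exact Finset.mem_insert_self φ Γ₀
    exact Finset.filter_subset _ Γ h2
  by_cases hm : φ ∈ Γ₀
  · exact ⟨Γ, by rw [h, Finset.insert_eq_self.mpr hm], rfl,
      Finset.insert_eq_self.mpr hφΓ⟩
  · refine ⟨Γ.erase φ, ?_, ?_, Finset.insert_erase hφΓ⟩
    · rw [typOf_erase, h, Finset.erase_insert hm]
    · ext p
      simp only [conOf, Set.mem_setOf_eq, Finset.mem_erase]
      exact ⟨fun h' => h'.2, fun h' => ⟨isTypForm_ne_sub hφ _ _, h'⟩⟩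

theorem sound_aux {Γ₀ : Finset (CFormula S)} {C : Set (CTy S × CTy S)}
    {Δ : Option (Tm S × CTy S)} (h : ADer Γ₀ C Δ) :
    ∀ Γ : Finset (CFormula S), typOf Γ = Γ₀ → C ⊆ conOf Γ → Nonempty (CDer Γ Δ) := by
  induction h with
  | @inst Γr Cr f Sc A' σ h1 h2 h3 =>
    intro Γf hT hC
    obtain ⟨Γ', hT', hc', hins⟩ := ctx_split (by rfl) hT
    have hC2 : Cr ⊆ conOf (insert (CFormula.idt f Sc) Γ') := by
      rw [conOf_insert_typ (by rfl), hc']; exact hC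
    refine ⟨?_⟩
    rw [← hins]
    exact CDer.subR (Sub.mono hC2 h3)
      (CDer.gvar f Sc σ h1 (fun p hp => Sub.mono hC2 (h2 p hp)))
  | @var2 Γr Cr x A B hsub =>
    intro Γf hT hC
    obtain ⟨Γ', hT', hc', hins⟩ := ctx_split (by rfl) hT
    have hC2 : Cr ⊆ conOf (insert (CFormula.tm (.var x) A) Γ') := by
      rw [conOf_insert_typ (by rfl), hc']; exact hC
    refine ⟨?_⟩
    rw [← hins]
    exact CDer.subR (Sub.mono hC2 hsub) (CDer.lvar Γ' x A)
  | @varK2 Γr Cr x A hsub =>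
    intro Γf hT hC
    exact ⟨CDer.subR (Sub.mono hC hsub) (CDer.varK Γf x)⟩
  | @absR2 Γr Cr x M A B1 B2 h1 hsub hfresh ih =>
    intro Γf hT hC
    obtain ⟨d⟩ := ih (insert (CFormula.tm (.var x) B1) Γf)
      (by rw [typOf_insert (by rfl), hT]) (by rw [conOf_insert_typ (by rfl)]; exact hC)
    exact ⟨CDer.subR (Sub.mono hC hsub)
      (CDer.absR d (fresh_of_typ (by rw [hT]; exact hfresh)))⟩
  | @abnR2 Γr Cr x M A B1 B2 h1 hsub hfresh ih =>
    intro Γf hT hC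
    obtain ⟨d⟩ := ih (insert (CFormula.tm M B1) Γf)
      (by rw [typOf_insert (by rfl), hT]) (by rw [conOf_insert_typ (by rfl)]; exact hC)
    exact ⟨CDer.subR (Sub.mono hC hsub)
      (CDer.abnR d (fresh_of_typ (by rw [hT]; exact hfresh)))⟩
  | @appR2 Γr Cr M N A B1 B2 h1 h2 hsub ih1 ih2 =>
    intro Γf hT hC
    obtain ⟨d1⟩ := ih1 Γf hT hC
    obtain ⟨d2⟩ := ih2 Γf hT hC
    exact ⟨CDer.appR (CDer.subR (Sub.mono hC hsub) d1) d2⟩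
  | @appL2 Γr Cr Δr M N A B1 B2 h1 h2 hsub ih1 ih2 =>
    intro Γf hT hC
    obtain ⟨Γ', hT', hc', hins⟩ := ctx_split (by rfl) hT
    have hC' : Cr ⊆ conOf Γ' := by rw [hc']; exact hC
    obtain ⟨d1⟩ := ih1 Γ' hT' hC'
    obtain ⟨d2⟩ := ih2 (insert (CFormula.tm N B2) Γ')
      (by rw [typOf_insert (by rfl), hT']) (by rw [conOf_insert_typ (by rfl)]; exact hC')
    refine ⟨?_⟩
    rw [← hins]
    exact CDer.appL (CDer.subR (Sub.mono hC' hsub) d1) d2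
  | @cnsL2 Γr Cr Δr c args A g i h1 hsub ih =>
    intro Γf hT hC
    obtain ⟨Γ', hT', hc', hins⟩ := ctx_split (by rfl) hT
    have hC' : Cr ⊆ conOf Γ' := by rw [hc']; exact hC
    obtain ⟨d⟩ := ih (insert (CFormula.tm (args i) (g c i)) Γ')
      (by rw [typOf_insert (by rfl), hT']) (by rw [conOf_insert_typ (by rfl)]; exact hC')
    refine ⟨?_⟩
    rw [← hins]
    exact CDer.subL (Sub.mono hC' hsub) (CDer.cnsL i (Finset.mem_univ c) d)
  | @cnsR2 Γr Cr c args A g hargs hsub ih =>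
    intro Γf hT hC
    exact ⟨CDer.subR (Sub.mono hC hsub)
      (CDer.cnsR (fun i => Classical.choice (ih i Γf hT hC)))⟩
  | @mchR2 Γr Cr M I pv bs A B Bs As hM hbs hsubB hsubAs hfresh ihM ihbs =>
    intro Γf hT hC
    obtain ⟨dM⟩ := ihM Γf hT hC
    refine ⟨CDer.mchR (CDer.subR (Sub.mono hC hsubB) dM) ?_ ?_⟩
    · intro c hc
      have hC2 : Cr ⊆ conOf (Γf ∪ patCtx c (pv c) (Bs c)) :=
        fun p hp => conOf_mono Finset.subset_union_left (hC hp)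
      have d := Classical.choice (ihbs c hc (Γf ∪ patCtx c (pv c) (Bs c))
        (by rw [typOf_union, typOf_patCtx, hT]) hC2)
      exact CDer.subR (Sub.mono hC2 (hsubAs c hc)) d
    · intro c hc i
      exact fresh_of_typ (by rw [hT]; exact hfresh c hc i)
  | @mchL2 Γr Cr Δr M I pv bs A A' Ai Bi Ax Bx h1 h2 hsubA hsubP hsubAx hsubBx
      hfresh ih1 ih2 =>
    intro Γf hT hC
    obtain ⟨Γ', hT', hc', hins⟩ := ctx_split (by rfl) hT
    have hC' : Cr ⊆ conOf Γ' := by rw [hc']; exact hC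
    refine ⟨?_⟩
    rw [← hins]
    refine CDer.mchL (Bs := Bx) ?_ ?_ ?_
    · intro c hc i
      have d := Classical.choice (ih2 c hc i (insert (CFormula.tm (bs c) (Ax c i)) Γ')
        (by rw [typOf_insert (by rfl), hT']) (by rw [conOf_insert_typ (by rfl)]; exact hC'))
      exact CDer.subL (Sub.mono hC' (hsubAx c hc i)) d
    · intro c hc
      have d := Classical.choice (ih1 c hc
        (insert (CFormula.tm (pairTm M (bs c)) (A' c)) Γ')
        (by rw [typOf_insert (by rfl), hT']) (by rw [conOf_insert_typ (by rfl)]; exact hC'))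
      have s1 : Sub Cr (pairTy (CTy.sum {c} Bx) A) (pairTy (Bi c) (Ai c)) := by
        refine Sub.sum (Finset.Subset.refl _) ?_
        intro d' hd' i
        split_ifs
        · exact hsubBx c hc
        · exact hsubA c hc
      exact CDer.subL (Sub.mono hC' (Sub.tr s1 (hsubP c hc))) d
    · intro c hc i
      exact ⟨fresh_of_typ (by rw [hT']; exact (hfresh c hc i).1), (hfresh c hc i).2⟩
  | @fixR2 Γr Cr x M A B h1 hsub hfresh ih =>
    intro Γf hT hC
    have hC2 : Cr ⊆ conOf (insert (CFormula.tm (.var x) A) Γf) := by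
      rw [conOf_insert_typ (by rfl)]; exact hC
    obtain ⟨d⟩ := ih (insert (CFormula.tm (.var x) A) Γf)
      (by rw [typOf_insert (by rfl), hT]) hC2
    exact ⟨CDer.fixR (CDer.subR (Sub.mono hC2 hsub) d)
      (fresh_of_typ (by rw [hT]; exact hfresh))⟩
  | @cnsK2 Γr Cr Δr c args A B i h1 hok ih =>
    intro Γf hT hC
    obtain ⟨Γ', hT', hc', hins⟩ := ctx_split (by rfl) hT
    have hC' : Cr ⊆ conOf Γ' := by rw [hc']; exact hC
    obtain ⟨d⟩ := ih (insert (CFormula.tm (args i) B) Γ')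
      (by rw [typOf_insert (by rfl), hT']) (by rw [conOf_insert_typ (by rfl)]; exact hC')
    refine ⟨?_⟩
    rw [← hins]
    exact CDer.subL Sub.ok (CDer.cnsK i (CDer.subL (Sub.mono hC' hok) d))
  | @funK2 Γr Cr Δr M N A B h1 hsub ih =>
    intro Γf hT hC
    obtain ⟨Γ', hT', hc', hins⟩ := ctx_split (by rfl) hT
    have hC' : Cr ⊆ conOf Γ' := by rw [hc']; exact hC
    obtain ⟨d⟩ := ih (insert (CFormula.tm M B) Γ')
      (by rw [typOf_insert (by rfl), hT']) (by rw [conOf_insert_typ (by rfl)]; exact hC')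
    refine ⟨?_⟩
    rw [← hins]
    exact CDer.subL Sub.ok (CDer.funK (CDer.subL (Sub.mono hC' hsub) d))
  | @cnsDL21 Γr Cr Δr c args A B1 B2 hsub =>
    intro Γf hT hC
    obtain ⟨Γ', hT', hc', hins⟩ := ctx_split (by rfl) hT
    have hC' : Cr ⊆ conOf Γ' := by rw [hc']; exact hC
    refine ⟨?_⟩
    rw [← hins]
    exact CDer.subL (Sub.mono hC' hsub) (CDer.cnsDL (Or.inl ⟨B1, B2, rfl⟩))
  | @cnsDL22 Γr Cr Δr c args A B1 B2 hsub =>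
    intro Γf hT hC
    obtain ⟨Γ', hT', hc', hins⟩ := ctx_split (by rfl) hT
    have hC' : Cr ⊆ conOf Γ' := by rw [hc']; exact hC
    refine ⟨?_⟩
    rw [← hins]
    exact CDer.subL (Sub.mono hC' hsub) (CDer.cnsDL (Or.inr (Or.inl ⟨B1, B2, rfl⟩)))
  | @cnsDL23 Γr Cr Δr c args A g hsub =>
    intro Γf hT hC
    obtain ⟨Γ', hT', hc', hins⟩ := ctx_split (by rfl) hT
    have hC' : Cr ⊆ conOf Γ' := by rw [hc']; exact hC
    refine ⟨?_⟩
    rw [← hins]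
    exact CDer.subL (Sub.mono hC' hsub)
      (CDer.cnsDL (Or.inr (Or.inr ⟨Finset.univ.erase c, g, rfl,
        Finset.notMem_erase c _⟩)))
  | @absDL2 Γr Cr Δr x M A g hsub =>
    intro Γf hT hC
    obtain ⟨Γ', hT', hc', hins⟩ := ctx_split (by rfl) hT
    have hC' : Cr ⊆ conOf Γ' := by rw [hc']; exact hC
    refine ⟨?_⟩
    rw [← hins]
    exact CDer.subL (Sub.mono hC' hsub) CDer.absDL

/-- Soundness of the algorithmic system relative to the
declarative one. -/
theorem algorithmic_soundness {S : Signature} (Γ : Finset (CFormula S))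
    (Δ : Option (Tm S × CTy S)) (h : ADer (typOf Γ) (conOf Γ) Δ) :
    Nonempty (CDer Γ Δ) := by
  exact sound_aux h Γ rfl (fun p hp => hp)

end Constr
end
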